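/- arXiv:1711.00822 — 3 statements merged into one kernel-verified Lean document; each statement's English description precedes it below -/
import Mathlib

section
/- Let f ∈ C³(ℝ) satisfy f‴(v) + f‴(−v) ≥ 0 for all v, and f‴(v) ≥ 0 for all v ≥ 0. Then for all t ≥ 0 and r > 0: (f(t+r) − f(t−r))/r − (f′(t+r) + f′(t−r)) ≤ 0. -/
noncomputable section

open Real MeasureTheory Filter Set

/-- Euclidean 3-space. -/
abbrev E3 : Type := EuclideanSpace ℝ (Fin 3)

/-- Minkowski spacetime `ℝ^{1+3}`, coordinates `(t, x)`. -/
abbrev Spt : Type := ℝ × E3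

/-- The unit sphere `S² ⊆ ℝ³`. -/
abbrev Sph : Type := Metric.sphere (0 : E3) 1

/-- The (suitably normalized) surface measure on the unit sphere. -/
instance : MeasureSpace Sph := ⟨(volume : Measure E3).toSphere⟩

/-- The japanese bracket `⟨s⟩ = (1+s²)^{1/2}`. -/
def jb (s : ℝ) : ℝ := Real.sqrt (1 + s ^ 2)

/-- Time derivative `∂_t φ`. -/
def pt (φ : Spt → ℝ) (p : Spt) : ℝ := fderiv ℝ φ p (1, 0)

/-- Spatial coordinate derivative `∂_i φ`. -/
def px (i : Fin 3) (φ : Spt → ℝ) (p : Spt) : ℝ := fderiv ℝ φ p (0, EuclideanSpace.single i 1)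

/-- Radial derivative `∂_r φ = ω·∇φ`, `ω = x/|x|`. -/
def pr (φ : Spt → ℝ) (p : Spt) : ℝ := ∑ i, (p.2 i / ‖p.2‖) * px i φ p

/-- The d'Alembertian `□φ = -∂_t²φ + Δφ`. -/
def box (φ : Spt → ℝ) (p : Spt) : ℝ := - pt (pt φ) p + ∑ i, px i (px i φ) p

/-- `|∇φ|²`. -/
def gradSq (φ : Spt → ℝ) (p : Spt) : ℝ := ∑ i, (px i φ p) ^ 2

/-- The squared angular gradient `|∇̸φ|² = |∇φ|² - (∂_rφ)²`. -/
def angSq (φ : Spt → ℝ) (p : Spt) : ℝ := gradSq φ p - (pr φ p) ^ 2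

/-- `|∂φ|² = (∂_tφ)² + |∇φ|²`. -/
def pdSq (φ : Spt → ℝ) (p : Spt) : ℝ := (pt φ p) ^ 2 + gradSq φ p

/-- `|∂̄φ|² = ((∂_t+∂_r)φ)² + |∇̸φ|²`, derivatives tangential to outgoing cones. -/
def tanSq (φ : Spt → ℝ) (p : Spt) : ℝ := (pt φ p + pr φ p) ^ 2 + angSq φ p

/-- The function `r·φ`. -/
def rmul (φ : Spt → ℝ) : Spt → ℝ := fun p => ‖p.2‖ * φ p

/-- `(∂_t + ∂_r) φ`. -/
def Lp (φ : Spt → ℝ) (p : Spt) : ℝ := pt φ p + pr φ p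

/-- `(∂_t - ∂_r) φ`. -/
def Lm (φ : Spt → ℝ) (p : Spt) : ℝ := pt φ p - pr φ p

/-- The commuting vector fields: translations `∂_t`, `∂_i`, rotations `Ω_ij = x^i∂_j - x^j∂_i`,
boosts `Ω_0i = x^i∂_t + t∂_i`, and scaling `S = t∂_t + x·∇`. -/
inductive VF : Type
  | time : VF
  | sp : Fin 3 → VF
  | rot : Fin 3 → Fin 3 → VF
  | boost : Fin 3 → VF
  | scal : VF
  deriving DecidableEq, Fintype

/-- Action of one commuting vector field on a function. -/
def VF.app : VF → (Spt → ℝ) → Spt → ℝ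
  | .time, φ => pt φ
  | .sp i, φ => px i φ
  | .rot i j, φ => fun p => p.2 i * px j φ p - p.2 j * px i φ p
  | .boost i, φ => fun p => p.2 i * pt φ p + p.1 * px i φ p
  | .scal, φ => fun p => p.1 * pt φ p + ∑ i, p.2 i * px i φ p

/-- `Z^I φ` for a multi-index `I` of length `m`. -/
def Zop {m : ℕ} (I : Fin m → VF) (φ : Spt → ℝ) : Spt → ℝ := (List.ofFn I).foldr VF.app φ

/-- `Σ_{|I| ≤ k} ‖⟨t-r⟩^{s-1} (Z^I φ)(t,·)‖_{L²(ℝ³)}`. -/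
def ZsumNorm (k : ℕ) (s t : ℝ) (φ : Spt → ℝ) : ℝ :=
  ∑ m ∈ Finset.range (k + 1), ∑ I : Fin m → VF,
    Real.sqrt (∫ x : E3, (jb (t - ‖x‖) ^ (s - 1) * Zop I φ (t, x)) ^ 2)

/-- Square integrability of all the integrands entering `ZsumNorm k s t φ`. -/
def ZsumFinite (k : ℕ) (s t : ℝ) (φ : Spt → ℝ) : Prop :=
  ∀ m : ℕ, m ≤ k → ∀ I : Fin m → VF,
    Integrable (fun x : E3 => (jb (t - ‖x‖) ^ (s - 1) * Zop I φ (t, x)) ^ 2)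

/-- `Σ_{|I| ≤ k} ‖∂ Z^I φ(t,·)‖_{L²(ℝ³)}`. -/
def ZenergyNorm (k : ℕ) (t : ℝ) (φ : Spt → ℝ) : ℝ :=
  ∑ m ∈ Finset.range (k + 1), ∑ I : Fin m → VF,
    Real.sqrt (∫ x : E3, pdSq (Zop I φ) (t, x))

/-- The backward domain of dependence `𝒟` of the ball of radius `R` at time `t₂`, above `t = t₁`. -/
def Dom (t₁ t₂ R : ℝ) : Set Spt := {p : Spt | t₁ ≤ p.1 ∧ p.1 ≤ t₂ ∧ ‖p.2‖ ≤ R + p.1 - t₂}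

/-- Flux integral `∫∫_{C_{R'}} |∂̄φ|² · wt(r - t) dS dt` over the truncated outgoing null cone
`C_{R'} = {(t,x) : max(t₁, t₂ - R') ≤ t ≤ t₂, |x| = R' + t - t₂}`. -/
def coneFlux (wt : ℝ → ℝ) (φ : Spt → ℝ) (R' t₁ t₂ : ℝ) : ℝ :=
  ∫ t in (max t₁ (t₂ - R'))..t₂, (R' + t - t₂) ^ 2 *
    ∫ ω : Sph, tanSq φ (t, (R' + t - t₂) • (ω : E3)) * wt ((R' + t - t₂) - t)

/-- The squared norm `‖φ(t,·)‖²_{1,+,s-1}`. -/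
def normPlusSq (s : ℝ) (φ : Spt → ℝ) (t : ℝ) : ℝ :=
  ∫ x : E3,
    (jb (t + ‖x‖) ^ (2 * s) * ((Lp (rmul φ) (t, x)) ^ 2 + angSq (rmul φ) (t, x))
      + jb (t - ‖x‖) ^ (2 * s) * ((Lm (rmul φ) (t, x)) ^ 2 + (φ (t, x)) ^ 2
          + (rmul φ (t, x)) ^ 2 / jb (t - ‖x‖) ^ 2)) / ‖x‖ ^ 2

/-- The norm `‖φ(t,·)‖_{1,+,s-1}`. -/
def normPlus (s : ℝ) (φ : Spt → ℝ) (t : ℝ) : ℝ := Real.sqrt (normPlusSq s φ t)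

/-- The conformal flux `F_R^s(t₁,t₂)` through the outgoing cone `{|x| = R + t - t₂}`. -/
def cFlux (s : ℝ) (φ : Spt → ℝ) (R t₁ t₂ : ℝ) : ℝ :=
  ∫ t in t₁..t₂, ∫ ω : Sph,
    (jb (t + (R + t - t₂)) ^ (2 * s) * (Lp (rmul φ) (t, (R + t - t₂) • (ω : E3))) ^ 2
      + jb (t - (R + t - t₂)) ^ (2 * s) * angSq (rmul φ) (t, (R + t - t₂) • (ω : E3)))

/-- The conformal energy `E^s_R(t)`. -/
def cE (s : ℝ) (φ : Spt → ℝ) (R t : ℝ) : ℝ :=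
  ∫ x in Metric.closedBall (0 : E3) R,
    (jb (t + ‖x‖) ^ (2 * s) * (Lp (rmul φ) (t, x)) ^ 2
      + (jb (t + ‖x‖) ^ (2 * s) + jb (t - ‖x‖) ^ (2 * s)) * angSq (rmul φ) (t, x)
      + jb (t - ‖x‖) ^ (2 * s) * (Lm (rmul φ) (t, x)) ^ 2) / ‖x‖ ^ 2

/-- `‖⟨t+r⟩^s (□φ)(t,·)‖_{L²(ℝ³)}`. -/
def boxNorm (s : ℝ) (φ : Spt → ℝ) (t : ℝ) : ℝ :=
  Real.sqrt (∫ x : E3, (jb (t + ‖x‖) ^ s * box φ (t, x)) ^ 2)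

/-! Radiation field machinery. A "smooth function on `ℝ × S²`" is modelled as a smooth
function on `ℝ × ℝ³`, only whose values on `ℝ × S²` matter (all the operators acting on it
below are tangential to `ℝ × S²`). -/

/-- `∂_q F` for `F = F(q, ω)`. -/
def dq (F : ℝ × E3 → ℝ) : ℝ × E3 → ℝ := fun p => fderiv ℝ F p (1, 0)

/-- `⟨q⟩ ∂_q F`. -/
def Dq (F : ℝ × E3 → ℝ) : ℝ × E3 → ℝ := fun p => jb p.1 * fderiv ℝ F p (1, 0)

/-- Rotation `Ω_ij` acting in the `ω` variable. -/
def RotW (i j : Fin 3) (F : ℝ × E3 → ℝ) : ℝ × E3 → ℝ := fun p =>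
  p.2 i * fderiv ℝ F p (0, EuclideanSpace.single j 1)
    - p.2 j * fderiv ℝ F p (0, EuclideanSpace.single i 1)

/-- `∂_ω^α F`, a composition of rotations in `ω`. -/
def RotPow {a : ℕ} (α : Fin a → Fin 3 × Fin 3) (F : ℝ × E3 → ℝ) : ℝ × E3 → ℝ :=
  (List.ofFn α).foldr (fun ij G => RotW ij.1 ij.2 G) F

/-- `(⟨q⟩∂_q)^k ∂_ω^α F`. -/
def DF (k : ℕ) {a : ℕ} (α : Fin a → Fin 3 × Fin 3) (F : ℝ × E3 → ℝ) : ℝ × E3 → ℝ :=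
  Dq^[k] (RotPow α F)

/-- The spherical Laplacian `Δ_ω = Σ_{i<j} Ω_ij²` acting in `ω`. -/
def sphLap (F : ℝ × E3 → ℝ) : ℝ × E3 → ℝ := fun p =>
  RotW 0 1 (RotW 0 1 F) p + RotW 0 2 (RotW 0 2 F) p + RotW 1 2 (RotW 1 2 F) p

/-- The squared norm `‖F‖²_{N,γ-1/2} = Σ_{k+|α|≤N} ∫∫ |(⟨q⟩∂_q)^k ∂_ω^α F|² ⟨q⟩^{2γ-1} dS(ω) dq`. -/
def RFnormSq (N : ℕ) (γ : ℝ) (F : ℝ × E3 → ℝ) : ℝ :=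
  ∑ k ∈ Finset.range (N + 1), ∑ a ∈ Finset.range (N + 1 - k), ∑ α : Fin a → Fin 3 × Fin 3,
    ∫ q : ℝ, ∫ ω : Sph, (DF k α F (q, (ω : E3))) ^ 2 * jb q ^ (2 * γ - 1)

/-- The norm `‖F‖_{N,γ-1/2}`. -/
def RFnorm (N : ℕ) (γ : ℝ) (F : ℝ × E3 → ℝ) : ℝ := Real.sqrt (RFnormSq N γ F)

/-- Finiteness (integrability) of all the integrals entering `‖F‖²_{N,γ-1/2}`. -/
def RFfinite (N : ℕ) (γ : ℝ) (F : ℝ × E3 → ℝ) : Prop :=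
  ∀ k a : ℕ, k + a ≤ N → ∀ α : Fin a → Fin 3 × Fin 3,
    Integrable (fun p : ℝ × Sph => (DF k α F (p.1, (p.2 : E3))) ^ 2 * jb p.1 ^ (2 * γ - 1))

/-- The range of `⟨q⟩^γ |(⟨q⟩∂_q)^k ∂_ω^α F|` on `ℝ × S²`. -/
def RFsupSet (γ : ℝ) (k : ℕ) {a : ℕ} (α : Fin a → Fin 3 × Fin 3) (F : ℝ × E3 → ℝ) : Set ℝ :=
  Set.range (fun p : ℝ × Sph => jb p.1 ^ γ * |DF k α F (p.1, (p.2 : E3))|)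

/-- The norm `‖F‖_{N,∞,γ} = Σ_{k+|α|≤N} sup_{q,ω} ⟨q⟩^γ |(⟨q⟩∂_q)^k ∂_ω^α F(q,ω)|`. -/
def RFsup (N : ℕ) (γ : ℝ) (F : ℝ × E3 → ℝ) : ℝ :=
  ∑ k ∈ Finset.range (N + 1), ∑ a ∈ Finset.range (N + 1 - k), ∑ α : Fin a → Fin 3 × Fin 3,
    sSup (RFsupSet γ k α F)

/-- Finiteness of all the suprema entering `‖F‖_{N,∞,γ}`. -/
def RFsupFinite (N : ℕ) (γ : ℝ) (F : ℝ × E3 → ℝ) : Prop :=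
  ∀ k a : ℕ, k + a ≤ N → ∀ α : Fin a → Fin 3 × Fin 3, BddAbove (RFsupSet γ k α F)

/-- The cut-off `χ`, smooth, decreasing, `= 1` on `(-∞,1/8]` and `= 0` on `[1/4,∞)`. -/
structure IsCutoff (χ : ℝ → ℝ) : Prop where
  smooth : ContDiff ℝ (⊤ : ℕ∞) χ
  anti : Antitone χ
  mem : ∀ s : ℝ, χ s ∈ Set.Icc (0 : ℝ) 1
  one : ∀ s : ℝ, s ≤ 1/8 → χ s = 1
  zero : ∀ s : ℝ, 1/4 ≤ s → χ s = 0

/-- The exterior cut-off `χ_e`, smooth, `= 0` on `(-∞,1]` and `= 1` on `[2,∞)`. -/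
structure IsMassCutoff (χe : ℝ → ℝ) : Prop where
  smooth : ContDiff ℝ (⊤ : ℕ∞) χe
  mem : ∀ s : ℝ, χe s ∈ Set.Icc (0 : ℝ) 1
  zero : ∀ s : ℝ, s ≤ 1 → χe s = 0
  one : ∀ s : ℝ, 2 ≤ s → χe s = 1

/-- `ω = x/|x|`. -/
def uSph (x : E3) : E3 := ‖x‖⁻¹ • x

/-- The first-order approximate solution `ψ₀ = r^{-1} F₀(r-t,ω) χ(⟨t-r⟩/r)`. -/
def psi0 (χ : ℝ → ℝ) (F : ℝ × E3 → ℝ) : Spt → ℝ := fun p =>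
  ‖p.2‖⁻¹ * F (‖p.2‖ - p.1, uSph p.2) * χ (jb (p.1 - ‖p.2‖) / ‖p.2‖)

/-- The second-order approximate solution
`ψ₀₁ = (r^{-1} F₀(r-t,ω) + r^{-2} F₁(r-t,ω)) χ(⟨t-r⟩/r)`. -/
def psi01 (χ : ℝ → ℝ) (F F₁ : ℝ × E3 → ℝ) : Spt → ℝ := fun p =>
  (‖p.2‖⁻¹ * F (‖p.2‖ - p.1, uSph p.2) + (‖p.2‖ ^ 2)⁻¹ * F₁ (‖p.2‖ - p.1, uSph p.2))
    * χ (jb (p.1 - ‖p.2‖) / ‖p.2‖)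

/-- `F₁` is the second radiation field determined by `F`: it is smooth,
`2 ∂_q F₁ = Δ_ω F` and `F₁(0,ω) = 0` (on the sphere). -/
structure IsF1 (F F₁ : ℝ × E3 → ℝ) : Prop where
  smooth : ContDiff ℝ (⊤ : ℕ∞) F₁
  prop : ∀ q : ℝ, ∀ ω : E3, ‖ω‖ = 1 → 2 * dq F₁ (q, ω) = sphLap F (q, ω)
  init : ∀ ω : E3, ‖ω‖ = 1 → F₁ (0, ω) = 0

/-- The explicit exterior solution `ψ_e = M χ_e(r-t)/r` carrying the mass. -/
def psiE (M : ℝ) (χe : ℝ → ℝ) : Spt → ℝ := fun p => M * χe (‖p.2‖ - p.1) / ‖p.2‖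

/-- if `f‴(v) + f‴(-v) ≥ 0` for all `v` and `f‴(v) ≥ 0` for `v ≥ 0`, then
`(f(t+r) - f(t-r))/r - (f′(t+r) + f′(t-r)) ≤ 0` for all `t ≥ 0`, `r > 0`. -/
theorem weighted_deformation_sign (f : ℝ → ℝ) (hf : ContDiff ℝ 3 f)
    (h1 : ∀ v : ℝ, 0 ≤ iteratedDeriv 3 f v + iteratedDeriv 3 f (-v))
    (h2 : ∀ v : ℝ, 0 ≤ v → 0 ≤ iteratedDeriv 3 f v) :
    ∀ t : ℝ, 0 ≤ t → ∀ r : ℝ, 0 < r →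
      (f (t + r) - f (t - r)) / r - (deriv f (t + r) + deriv f (t - r)) ≤ 0 := by
  have e2 : iteratedDeriv 2 f = deriv (deriv f) := by
    simp [iteratedDeriv_succ, iteratedDeriv_one]
  have e3 : iteratedDeriv 3 f = deriv (iteratedDeriv 2 f) := iteratedDeriv_succ
  have hd1 : Differentiable ℝ f := hf.differentiable (by norm_num)
  have hf2 : ContDiff ℝ 2 (deriv f) :=
    (contDiff_succ_iff_deriv.mp (show ContDiff ℝ (2+1) f by norm_num; exact hf)).2.2
  have hd2 : Differentiable ℝ (deriv f) := hf2.differentiable (by norm_num)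
  have hf1 : ContDiff ℝ 1 (iteratedDeriv 2 f) := by
    rw [e2]
    exact (contDiff_succ_iff_deriv.mp (show ContDiff ℝ (1+1) (deriv f) by norm_num; exact hf2)).2.2
  have hd3 : Differentiable ℝ (iteratedDeriv 2 f) := hf1.differentiable (by norm_num)
  -- key: |b| ≤ a → f''(b) ≤ f''(a)
  have mono2 : MonotoneOn (iteratedDeriv 2 f) (Ici 0) := by
    apply monotoneOn_of_deriv_nonneg (convex_Ici 0) hd3.continuous.continuousOn
      hd3.differentiableOn
    intro x hx
    rw [← e3]
    exact h2 x (le_of_lt (by simpa using hx))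
  have symm2 : ∀ u : ℝ, 0 ≤ u → iteratedDeriv 2 f (-u) ≤ iteratedDeriv 2 f u := by
    have hG : MonotoneOn (fun u => iteratedDeriv 2 f u - iteratedDeriv 2 f (-u)) (Ici 0) := by
      have hdG : Differentiable ℝ (fun u => iteratedDeriv 2 f u - iteratedDeriv 2 f (-u)) :=
        hd3.sub (hd3.comp differentiable_neg)
      apply monotoneOn_of_deriv_nonneg (convex_Ici 0) hdG.continuous.continuousOn
        hdG.differentiableOn
      intro x _
      have h1' : HasDerivAt (fun u => iteratedDeriv 2 f u - iteratedDeriv 2 f (-u))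
          (deriv (iteratedDeriv 2 f) x - deriv (iteratedDeriv 2 f) (-x) * (-1)) x := by
        exact ((hd3 x).hasDerivAt).sub (((hd3 (-x)).hasDerivAt).comp x (hasDerivAt_neg x))
      rw [h1'.deriv, ← e3]
      have := h1 x
      linarith
    intro u hu
    have := hG (self_mem_Ici) (show u ∈ Ici 0 from hu) hu
    simp at this
    linarith
  have key : ∀ a b : ℝ, |b| ≤ a → iteratedDeriv 2 f b ≤ iteratedDeriv 2 f a := by
    intro a b hab
    have ha : (0:ℝ) ≤ a := le_trans (abs_nonneg b) hab
    rcases le_or_gt 0 b with hb | hb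
    · exact mono2 hb ha (le_trans (le_abs_self b) hab)
    · have h1' : iteratedDeriv 2 f b ≤ iteratedDeriv 2 f (-b) := by simpa using symm2 (-b) (by linarith)
      have h2' : iteratedDeriv 2 f (-b) ≤ iteratedDeriv 2 f a :=
        mono2 (show -b ∈ Ici (0:ℝ) by simp; linarith) ha (by rw [abs_of_neg hb] at hab; exact hab)
      linarith
  intro t ht r hr
  -- g antitone
  set g : ℝ → ℝ := fun r => f (t + r) - f (t - r) - r * (deriv f (t + r) + deriv f (t - r)) with hg
  have hder : ∀ r : ℝ, HasDerivAt g
      (-(r * (iteratedDeriv 2 f (t + r) - iteratedDeriv 2 f (t - r)))) r := by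
    intro r
    have hp : HasDerivAt (fun r => t + r) 1 r := by
      simpa using (hasDerivAt_id r).const_add t
    have hm : HasDerivAt (fun r => t - r) (-1) r := by
      exact (hasDerivAt_id' r).const_sub t
    have A : HasDerivAt (fun r => f (t + r)) (deriv f (t + r)) r := by
      simpa [Function.comp_def] using ((hd1 (t + r)).hasDerivAt).comp r hp
    have B : HasDerivAt (fun r => f (t - r)) (deriv f (t - r) * (-1)) r :=
      ((hd1 (t - r)).hasDerivAt).comp r hm
    have C : HasDerivAt (fun r => deriv f (t + r)) (iteratedDeriv 2 f (t + r)) r := by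
      have := ((hd2 (t + r)).hasDerivAt).comp r hp
      simpa [e2, Function.comp_def] using this
    have D : HasDerivAt (fun r => deriv f (t - r)) (iteratedDeriv 2 f (t - r) * (-1)) r := by
      have := ((hd2 (t - r)).hasDerivAt).comp r hm
      simpa [e2, Function.comp_def] using this
    have E : HasDerivAt (fun r => r * (deriv f (t + r) + deriv f (t - r)))
        (1 * (deriv f (t + r) + deriv f (t - r))
          + r * (iteratedDeriv 2 f (t + r) + iteratedDeriv 2 f (t - r) * (-1))) r :=
      (hasDerivAt_id r).mul (C.add D)
    have := (A.sub B).sub E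
    refine this.congr_deriv ?_
    ring
  have hanti : AntitoneOn g (Ici 0) := by
    apply antitoneOn_of_deriv_nonpos (convex_Ici 0)
      (fun x _ => ((hder x).continuousAt).continuousWithinAt)
      (fun x _ => ((hder x).differentiableAt).differentiableWithinAt)
    intro x hx
    rw [(hder x).deriv]
    have hx0 : (0:ℝ) < x := by simpa using hx
    have hkey : iteratedDeriv 2 f (t - x) ≤ iteratedDeriv 2 f (t + x) := by
      apply key
      rw [abs_le]; constructor <;> linarith
    nlinarith
  have hg0 : g 0 = 0 := by simp [hg]
  have hgr : g r ≤ 0 := by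
    have := hanti (self_mem_Ici) (show r ∈ Ici (0:ℝ) from hr.le) hr.le
    rw [hg0] at this; exact this
  have : (f (t + r) - f (t - r)) / r - (deriv f (t + r) + deriv f (t - r)) = g r / r := by
    field_simp [hg]
    rfl
  rw [this]
  exact div_nonpos_of_nonpos_of_nonneg hgr hr.le

end
end

section
/- Let s ≥ 1 and t ∈ ℝ. There is a constant C = C(s) such that for every C¹ function φ on ℝ³ (viewed at time t) with lim_{R→∞} sup_{|x|=R} ⟨t−R⟩^{2s} R φ(x)² = 0 and finite right-hand side: ∫_{ℝ³} ⟨t−r⟩^{2s} φ² dx/r² ≤ C ( ∫_{ℝ³} ⟨t−r⟩^{2s−2} φ² dx + ∫_{ℝ³} ⟨t−r⟩^{2s} (∂_r(rφ))² dx/r² ). -/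
noncomputable section

open Real MeasureTheory Filter Set

/-- Spatial radial derivative `∂_r g = ω·∇g` of a function on `ℝ³`. -/
def prS (g : E3 → ℝ) (x : E3) : ℝ := ∑ i, (x i / ‖x‖) * fderiv ℝ g x (EuclideanSpace.single i 1)


namespace WH
open scoped ENNReal NNReal

lemma jb_pos (q : ℝ) : 0 < jb q := Real.sqrt_pos.2 (by positivity)

lemma abs_le_jb (q : ℝ) : |q| ≤ jb q := by
  rw [← Real.sqrt_sq_eq_abs]
  exact Real.sqrt_le_sqrt (by nlinarith)

lemma jb_continuous : Continuous jb := by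
  unfold jb; fun_prop

lemma jb_hasDerivAt (q : ℝ) : HasDerivAt jb (q / jb q) q := by
  have h1 : HasDerivAt (fun x : ℝ => 1 + x ^ 2) (2 * q) q := by
    simpa using ((hasDerivAt_pow 2 q).const_add 1)
  have h2 := (Real.hasDerivAt_sqrt (by positivity : (1:ℝ) + q ^ 2 ≠ 0)).comp q h1
  refine h2.congr_deriv ?_
  unfold jb
  field_simp

lemma w_hasDerivAt (s t r : ℝ) :
    HasDerivAt (fun r => jb (t - r) ^ (2 * s))
      (2 * s * (r - t) * jb (t - r) ^ (2 * s - 2)) r := by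
  have hi : HasDerivAt (fun r : ℝ => jb (t - r)) ((r - t) / jb (t - r)) r := by
    have h1 : HasDerivAt (fun r : ℝ => t - r) (-1) r := by
      simpa using ((hasDerivAt_id r).const_sub t)
    have := (jb_hasDerivAt (t - r)).comp r h1
    refine this.congr_deriv ?_; field_simp; ring
  have h2 := hi.rpow_const (p := 2 * s) (Or.inl (jb_pos (t - r)).ne')
  convert h2 using 1
  have hJ := jb_pos (t - r)
  have : jb (t - r) ^ (2 * s - 1) = jb (t - r) * jb (t - r) ^ (2 * s - 2) := by
    have h3 := Real.rpow_add hJ 1 (2 * s - 2)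
    rw [Real.rpow_one] at h3
    rw [show (2:ℝ) * s - 1 = 1 + (2 * s - 2) by ring, h3]
  rw [this]
  field_simp

lemma core_poly (s u v r J rt : ℝ) (hs : 1 ≤ s) (hr : 0 < r) (hJ : 0 < J) (h1 : rt ≤ J) :
    J^2*u^2 + 4*(2*s*rt*u^2*r + 2*u*v*r*J^2 - u^2*J^2) ≤ 16*s^2*u^2*r^2 + 8*v^2*r^2*J^2 := by
  nlinarith [sq_nonneg (u - 2*v*r), mul_nonneg (sq_nonneg (u - 2*v*r)) (sq_nonneg J),
    sq_nonneg (4*s*u*r - u*J),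
    mul_nonneg (mul_nonneg (mul_nonneg (by linarith : (0:ℝ) ≤ s) (sq_nonneg u)) hr.le)
      (by linarith : (0:ℝ) ≤ J - rt)]

lemma core_div (s u v r J rt A : ℝ) (hs : 1 ≤ s) (hr : 0 < r) (hJ : 0 < J) (h1 : rt ≤ J)
    (hA : 0 ≤ A) :
    A^2*u^2/r^2 + 4*((2*s*rt*(A^2/J^2)*u^2 + 2*A^2*u*v)/r - A^2*u^2/r^2)
      ≤ 16*s^2*(A^2/J^2)*u^2 + 8*A^2*v^2 := by
  rw [← sub_nonneg]
  have key : 16*s^2*(A^2/J^2)*u^2 + 8*A^2*v^2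
      - (A^2*u^2/r^2 + 4*((2*s*rt*(A^2/J^2)*u^2 + 2*A^2*u*v)/r - A^2*u^2/r^2))
      = A^2/(J^2*r^2) * ((16*s^2*u^2*r^2 + 8*v^2*r^2*J^2)
          - (J^2*u^2 + 4*(2*s*rt*u^2*r + 2*u*v*r*J^2 - u^2*J^2))) := by
    field_simp
  rw [key]
  exact mul_nonneg (by positivity) (by linarith [core_poly s u v r J rt hs hr hJ h1])

section radial
variable (s t : ℝ) (φ : E3 → ℝ) (ω : E3)

/-- u -/
def uu (φ : E3 → ℝ) (ω : E3) : ℝ → ℝ := fun r => r * φ (r • ω)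
/-- v = u' -/
def vv (φ : E3 → ℝ) (ω : E3) : ℝ → ℝ := fun r => φ (r • ω) + r * (fderiv ℝ φ (r • ω)) ω
def Wt (s t : ℝ) : ℝ → ℝ := fun r => jb (t - r) ^ (2 * s)
def Wt' (s t : ℝ) : ℝ → ℝ := fun r => 2 * s * (r - t) * jb (t - r) ^ (2 * s - 2)
def GG (s t : ℝ) (φ : E3 → ℝ) (ω : E3) : ℝ → ℝ := fun r => Wt s t r * (uu φ ω r) ^ 2 / r
def GG' (s t : ℝ) (φ : E3 → ℝ) (ω : E3) : ℝ → ℝ := fun r =>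
  (Wt' s t r * (uu φ ω r) ^ 2 + 2 * Wt s t r * uu φ ω r * vv φ ω r) / r
    - Wt s t r * (uu φ ω r) ^ 2 / r ^ 2
def Lre (s t : ℝ) (φ : E3 → ℝ) (ω : E3) : ℝ → ℝ := fun r => Wt s t r * (φ (r • ω)) ^ 2
def Hre (s t : ℝ) (φ : E3 → ℝ) (ω : E3) : ℝ → ℝ := fun r =>
  16 * s ^ 2 * jb (t - r) ^ (2 * s - 2) * (uu φ ω r) ^ 2 + 8 * Wt s t r * (vv φ ω r) ^ 2

variable (hφ : ContDiff ℝ 1 φ)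

lemma uu_hasDerivAt (hφ : ContDiff ℝ 1 φ) (r : ℝ) : HasDerivAt (uu φ ω) (vv φ ω r) r := by
  have hc : HasDerivAt (fun r : ℝ => r • ω) ω r := by
    simpa using (hasDerivAt_id r).smul_const ω
  have hφ1 : HasFDerivAt φ (fderiv ℝ φ (r • ω)) (r • ω) :=
    (hφ.differentiable one_ne_zero (r • ω)).hasFDerivAt
  have hcomp : HasDerivAt (fun r : ℝ => φ (r • ω)) ((fderiv ℝ φ (r • ω)) ω) r :=
    hφ1.comp_hasDerivAt r hc
  have := (hasDerivAt_id r).mul hcomp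
  refine this.congr_deriv ?_
  simp only [vv, id]
  ring

lemma GG_hasDerivAt (hφ : ContDiff ℝ 1 φ) (r : ℝ) (hr : 0 < r) :
    HasDerivAt (GG s t φ ω) (GG' s t φ ω r) r := by
  have h1 : HasDerivAt (fun r => Wt s t r * (uu φ ω r) ^ 2)
      (Wt' s t r * (uu φ ω r) ^ 2 + Wt s t r * (2 * uu φ ω r * vv φ ω r)) r := by
    exact (w_hasDerivAt s t r).mul (((uu_hasDerivAt φ ω hφ r).pow 2).congr_deriv (by simp))
  have h2 := h1.div (hasDerivAt_id r) hr.ne'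
  refine h2.congr_deriv ?_
  unfold GG'
  simp only [id]
  field_simp

lemma vv_continuous (hφ : ContDiff ℝ 1 φ) : Continuous (vv φ ω) := by
  have h1 : Continuous fun r : ℝ => r • ω := by fun_prop
  have h2 : Continuous (fderiv ℝ φ) := hφ.continuous_fderiv one_ne_zero
  have h3 : Continuous fun r : ℝ => (fderiv ℝ φ (r • ω)) ω :=
    (h2.comp h1).clm_apply continuous_const
  exact ((hφ.continuous).comp h1).add (continuous_id.mul h3)

lemma Wt_continuous : Continuous (Wt s t) := by
  unfold Wt
  exact (jb_continuous.comp (by fun_prop)).rpow_const fun r => Or.inl (jb_pos _).ne'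

lemma jbp_continuous (p : ℝ) : Continuous (fun r => jb (t - r) ^ p) :=
  (jb_continuous.comp (by fun_prop)).rpow_const fun r => Or.inl (jb_pos _).ne'

lemma Lre_continuous (hφ : ContDiff ℝ 1 φ) : Continuous (Lre s t φ ω) :=
  (Wt_continuous s t).mul (((hφ.continuous).comp (by fun_prop)).pow 2)

lemma uu_continuous (hφ : ContDiff ℝ 1 φ) : Continuous (uu φ ω) :=
  continuous_id.mul ((hφ.continuous).comp (by fun_prop))

lemma Hre_continuous (hφ : ContDiff ℝ 1 φ) : Continuous (Hre s t φ ω) := by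
  unfold Hre
  exact ((continuous_const.mul (jbp_continuous t (2*s-2))).mul
      ((uu_continuous φ ω hφ).pow 2)).add
    ((continuous_const.mul (Wt_continuous s t)).mul ((vv_continuous φ ω hφ).pow 2))

lemma GG'_continuousOn (hφ : ContDiff ℝ 1 φ) :
    ContinuousOn (GG' s t φ ω) {r : ℝ | r ≠ 0} := by
  unfold GG' Wt'
  have hW'c : Continuous (fun r => 2 * s * (r - t) * jb (t - r) ^ (2 * s - 2)) :=
    (continuous_const.mul (by fun_prop)).mul (jbp_continuous t (2*s-2))
  apply ContinuousOn.sub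
  · exact ContinuousOn.div
      (((hW'c.mul ((uu_continuous φ ω hφ).pow 2)).add
        (((continuous_const.mul (Wt_continuous s t)).mul (uu_continuous φ ω hφ)).mul
          (vv_continuous φ ω hφ))).continuousOn)
      continuousOn_id (fun x hx => hx)
  · exact ContinuousOn.div
      (((Wt_continuous s t).mul ((uu_continuous φ ω hφ).pow 2)).continuousOn)
      (continuousOn_pow 2) (fun x hx => pow_ne_zero 2 hx)

lemma pointwise_ineq (hs : 1 ≤ s) (r : ℝ) (hr : 0 < r) :
    Lre s t φ ω r + 4 * GG' s t φ ω r ≤ Hre s t φ ω r := by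
  set J := jb (t - r) with hJdef
  have hJ : 0 < J := jb_pos _
  set A := J ^ s with hAdef
  have hA : 0 ≤ A := Real.rpow_nonneg hJ.le s
  have hrt : r - t ≤ J := le_trans (le_trans (le_abs_self _) (abs_sub_comm r t ▸ le_rfl)) (abs_le_jb (t - r))
  have hA2 : J ^ (2 * s) = A ^ 2 := by
    rw [hAdef, ← Real.rpow_natCast (J ^ s) 2, ← Real.rpow_mul hJ.le]
    norm_num
    ring_nf
  have hm2 : J ^ (2 * s - 2) = A ^ 2 / J ^ 2 := by
    rw [hAdef, ← Real.rpow_natCast (J ^ s) 2, ← Real.rpow_mul hJ.le, ← Real.rpow_natCast J 2,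
      ← Real.rpow_sub hJ]
    norm_num
    ring_nf
  have hphi : φ (r • ω) = uu φ ω r / r := by
    unfold uu; field_simp
  have H := core_div s (uu φ ω r) (vv φ ω r) r J (r - t) A hs hr hJ hrt hA
  have e1 : Lre s t φ ω r + 4 * GG' s t φ ω r
      = A^2*(uu φ ω r)^2/r^2 + 4*((2*s*(r-t)*(A^2/J^2)*(uu φ ω r)^2
          + 2*A^2*(uu φ ω r)*(vv φ ω r))/r - A^2*(uu φ ω r)^2/r^2) := by
    unfold Lre GG' Wt Wt'
    rw [← hJdef, hA2, hm2, hphi]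
    field_simp
  have e2 : Hre s t φ ω r = 16*s^2*(A^2/J^2)*(uu φ ω r)^2 + 8*A^2*(vv φ ω r)^2 := by
    unfold Hre Wt
    rw [← hJdef, hA2, hm2]
  linarith [H, e1.le, e1.ge, e2.le, e2.ge]

lemma radial_interval (hs : 1 ≤ s) (hφ : ContDiff ℝ 1 φ) (a b : ℝ) (ha : 0 < a) (hab : a ≤ b) :
    ∫ r in a..b, Lre s t φ ω r
      ≤ 4 * GG s t φ ω a + ∫ r in a..b, Hre s t φ ω r := by
  have huIcc : uIcc a b = Icc a b := uIcc_of_le hab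
  have hpos : ∀ x ∈ uIcc a b, 0 < x := by
    rw [huIcc]; exact fun x hx => lt_of_lt_of_le ha hx.1
  have hG'int : IntervalIntegrable (GG' s t φ ω) volume a b := by
    apply ContinuousOn.intervalIntegrable
    exact (GG'_continuousOn s t φ ω hφ).mono (fun x hx => (hpos x hx).ne')
  have hftc : ∫ r in a..b, GG' s t φ ω r = GG s t φ ω b - GG s t φ ω a :=
    intervalIntegral.integral_eq_sub_of_hasDerivAt
      (fun x hx => GG_hasDerivAt s t φ ω hφ x (hpos x hx)) hG'int
  have hLint : IntervalIntegrable (Lre s t φ ω) volume a b :=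
    (Lre_continuous s t φ ω hφ).intervalIntegrable a b
  have hHint : IntervalIntegrable (Hre s t φ ω) volume a b :=
    (Hre_continuous s t φ ω hφ).intervalIntegrable a b
  have hmono : (∫ r in a..b, (Lre s t φ ω r + 4 * GG' s t φ ω r))
      ≤ ∫ r in a..b, Hre s t φ ω r := by
    apply intervalIntegral.integral_mono_on hab (hLint.add (hG'int.const_mul 4)) hHint
    intro x hx
    exact pointwise_ineq s t φ ω hs x (lt_of_lt_of_le ha hx.1)
  rw [intervalIntegral.integral_add hLint (hG'int.const_mul 4),
    intervalIntegral.integral_const_mul, hftc] at hmono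
  have hGb : 0 ≤ GG s t φ ω b := by
    unfold GG Wt
    have hb : 0 < b := lt_of_lt_of_le ha hab
    exact div_nonneg (mul_nonneg (Real.rpow_nonneg (jb_pos _).le _) (sq_nonneg _)) hb.le
  linarith
end radial

lemma decomp (y : E3) : ∑ i, y i • EuclideanSpace.single i (1:ℝ) = y := by
  have := (EuclideanSpace.basisFun (Fin 3) ℝ).sum_repr y
  simpa [EuclideanSpace.basisFun_apply, EuclideanSpace.basisFun_repr] using this

lemma prS_eq_fderiv (g : E3 → ℝ) (x : E3) :
    prS g x = fderiv ℝ g x (‖x‖⁻¹ • x) := by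
  have h1 : (‖x‖⁻¹ • x : E3) = ∑ i, (x i / ‖x‖) • EuclideanSpace.single i (1:ℝ) := by
    rw [show (fun i => (x i / ‖x‖) • EuclideanSpace.single i (1:ℝ))
        = fun i => ((‖x‖⁻¹ • x : E3) i) • EuclideanSpace.single i (1:ℝ) by
      funext i
      congr 1
      simp [div_eq_inv_mul]]
    rw [decomp]
  rw [h1, map_sum]
  unfold prS
  congr 1
  funext i
  rw [ContinuousLinearMap.map_smul]
  simp [smul_eq_mul]

lemma prS_eq_vv (φ : E3 → ℝ) (hφ : ContDiff ℝ 1 φ) (ω : E3) (hω : ‖ω‖ = 1) (r : ℝ)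
    (hr : 0 < r) :
    prS (fun y => ‖y‖ * φ y) (r • ω) = vv φ ω r := by
  set g : E3 → ℝ := fun y => ‖y‖ * φ y with hg
  set x : E3 := r • ω with hx
  have hnx : ‖x‖ = r := by rw [hx, norm_smul, hω, Real.norm_eq_abs, abs_of_pos hr, mul_one]
  have hx0 : x ≠ 0 := by intro h; rw [h, norm_zero] at hnx; exact hr.ne hnx
  have hgd : DifferentiableAt ℝ g x := by
    exact ((contDiffAt_norm ℝ (n := 1) hx0).differentiableAt one_ne_zero).mul
      (hφ.differentiable one_ne_zero).differentiableAt
  have huv : (‖x‖⁻¹ • x : E3) = ω := by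
    rw [hnx, hx, smul_smul, inv_mul_cancel₀ hr.ne', one_smul]
  have h2 : prS g x = fderiv ℝ g x ω := by rw [prS_eq_fderiv, huv]
  -- identify fderiv g x ω with vv φ ω r
  have hc : HasDerivAt (fun ρ : ℝ => ρ • ω) ω r := by
    simpa using (hasDerivAt_id r).smul_const ω
  have hh : HasDerivAt (fun ρ : ℝ => g (ρ • ω)) (fderiv ℝ g x ω) r :=
    (HasFDerivAt.comp_hasDerivAt (l := g) (l' := fderiv ℝ g x) r hgd.hasFDerivAt hc)
  have heq : (fun ρ : ℝ => g (ρ • ω)) =ᶠ[nhds r] uu φ ω := by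
    filter_upwards [IsOpen.mem_nhds isOpen_Ioi hr] with ρ hρ
    have : ‖(ρ • ω : E3)‖ = ρ := by
      rw [norm_smul, hω, Real.norm_eq_abs, abs_of_pos hρ, mul_one]
    simp only [hg, uu, this]
  have hh2 : HasDerivAt (uu φ ω) (fderiv ℝ g x ω) r := hh.congr_of_eventuallyEq heq.symm
  rw [h2, hh2.unique (uu_hasDerivAt φ ω hφ r)]

lemma GG_eq (s t : ℝ) (φ : E3 → ℝ) (ω : E3) (a : ℝ) (ha : 0 < a) :
    GG s t φ ω a = Wt s t a * a * (φ (a • ω)) ^ 2 := by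
  unfold GG uu
  field_simp

lemma radial_lin (s t : ℝ) (hs : 1 ≤ s) (φ : E3 → ℝ) (hφ : ContDiff ℝ 1 φ) (ω : E3) :
    ∫⁻ r in Ioi (0:ℝ), ENNReal.ofReal (Lre s t φ ω r)
      ≤ ∫⁻ r in Ioi (0:ℝ), ENNReal.ofReal (Hre s t φ ω r) := by
  set R := ∫⁻ r in Ioi (0:ℝ), ENNReal.ofReal (Hre s t φ ω r) with hR
  set S : ℕ → Set ℝ := fun n => Ioc ((n+1:ℝ)⁻¹) (n+1:ℝ) with hS
  have hSmono : Monotone S := by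
    intro m n hmn
    apply Ioc_subset_Ioc
    · apply inv_anti₀ (by positivity)
      exact_mod_cast by exact_mod_cast Nat.add_le_add_right hmn 1
    · exact_mod_cast Nat.add_le_add_right hmn 1
  have hcover : ⋃ n, S n = Ioi (0:ℝ) := by
    ext x
    simp only [mem_iUnion, hS, mem_Ioc, mem_Ioi]
    constructor
    · rintro ⟨n, hn1, -⟩
      exact lt_trans (by positivity) hn1
    · intro hx
      obtain ⟨n, hn⟩ := exists_nat_gt (max x⁻¹ x)
      refine ⟨n, ?_, ?_⟩
      · have h1 : x⁻¹ < n + 1 := lt_trans (lt_of_le_of_lt (le_max_left _ _) hn) (by linarith)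
        calc ((n:ℝ)+1)⁻¹ < (x⁻¹)⁻¹ := by
              apply inv_strictAnti₀ (by positivity) h1
          _ = x := inv_inv x
      · exact le_of_lt (lt_trans (lt_of_le_of_lt (le_max_right _ _) hn) (by linarith))
  -- per-n bound
  have claim1 : ∀ n : ℕ, ∫⁻ r in S n, ENNReal.ofReal (Lre s t φ ω r)
      ≤ ENNReal.ofReal (4 * GG s t φ ω ((n+1:ℝ)⁻¹)) + R := by
    intro n
    set a := ((n:ℝ)+1)⁻¹ with hadef
    set b := ((n:ℝ)+1) with hbdef
    have ha : 0 < a := by positivity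
    have hab : a ≤ b := by
      rw [hadef, hbdef]
      have h1 : (1:ℝ) ≤ (n:ℝ) + 1 := by norm_num
      calc ((n:ℝ)+1)⁻¹ ≤ 1 := by
            rw [inv_le_one_iff₀]; right; exact h1
        _ ≤ (n:ℝ)+1 := h1
    have hLnn : ∀ r : ℝ, 0 ≤ Lre s t φ ω r := fun r =>
      mul_nonneg (Real.rpow_nonneg (jb_pos _).le _) (sq_nonneg _)
    have hHnn : ∀ r : ℝ, 0 ≤ Hre s t φ ω r := fun r => by
      apply add_nonneg
      · exact mul_nonneg (mul_nonneg (by positivity) (Real.rpow_nonneg (jb_pos _).le _))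
          (sq_nonneg _)
      · exact mul_nonneg (mul_nonneg (by norm_num) (Real.rpow_nonneg (jb_pos _).le _))
          (sq_nonneg _)
    have hLio : IntegrableOn (Lre s t φ ω) (Ioc a b) volume :=
      (Lre_continuous s t φ ω hφ).integrableOn_Ioc
    have hHio : IntegrableOn (Hre s t φ ω) (Ioc a b) volume :=
      (Hre_continuous s t φ ω hφ).integrableOn_Ioc
    calc ∫⁻ r in S n, ENNReal.ofReal (Lre s t φ ω r)
        = ENNReal.ofReal (∫ r in Ioc a b, Lre s t φ ω r) := by
          rw [ofReal_integral_eq_lintegral_ofReal hLio (ae_of_all _ hLnn)]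
      _ = ENNReal.ofReal (∫ r in a..b, Lre s t φ ω r) := by
          rw [intervalIntegral.integral_of_le hab]
      _ ≤ ENNReal.ofReal (4 * GG s t φ ω a + ∫ r in a..b, Hre s t φ ω r) :=
          ENNReal.ofReal_le_ofReal (radial_interval s t φ ω hs hφ a b ha hab)
      _ ≤ ENNReal.ofReal (4 * GG s t φ ω a) + ENNReal.ofReal (∫ r in a..b, Hre s t φ ω r) :=
          ENNReal.ofReal_add_le
      _ = ENNReal.ofReal (4 * GG s t φ ω a) + ∫⁻ r in Ioc a b, ENNReal.ofReal (Hre s t φ ω r) := by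
          rw [intervalIntegral.integral_of_le hab,
            ofReal_integral_eq_lintegral_ofReal hHio (ae_of_all _ hHnn)]
      _ ≤ ENNReal.ofReal (4 * GG s t φ ω a) + R := by
          gcongr
          rw [hR]
          apply lintegral_mono_set
          exact fun y hy => lt_trans ha hy.1
  rw [← hcover, setLIntegral_iUnion_of_directed _ hSmono.directed_le]
  apply ENNReal.le_of_forall_pos_le_add
  intro ε hε hRfin
  -- choose N with 4 * GG (a_m) ≤ ε for m ≥ N
  have htend : Tendsto (fun a : ℝ => Wt s t a * a * (φ (a • ω)) ^ 2) (nhds 0) (nhds 0) := by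
    have hc : Continuous (fun a : ℝ => Wt s t a * a * (φ (a • ω)) ^ 2) :=
      ((Wt_continuous s t).mul continuous_id).mul
        (((hφ.continuous).comp (by fun_prop)).pow 2)
    have := hc.tendsto 0
    simpa using this
  have hev : ∀ᶠ a in nhds (0:ℝ), Wt s t a * a * (φ (a • ω)) ^ 2 < (ε:ℝ)/4 := by
    apply htend.eventually_lt_const
    positivity
  obtain ⟨δ, hδ, hball⟩ := Metric.eventually_nhds_iff.1 hev
  obtain ⟨N, hN⟩ := exists_nat_gt δ⁻¹
  apply iSup_le
  intro n
  set m := max n N with hm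
  have hsub : S n ⊆ S m := hSmono (le_max_left n N)
  have ham : ((m:ℝ)+1)⁻¹ < δ := by
    have h1 : δ⁻¹ < (m:ℝ)+1 := by
      have : (N:ℝ) ≤ (m:ℝ) := by exact_mod_cast le_max_right n N
      linarith
    calc ((m:ℝ)+1)⁻¹ < (δ⁻¹)⁻¹ := inv_strictAnti₀ (by positivity) h1
      _ = δ := inv_inv δ
  have hGsmall : ENNReal.ofReal (4 * GG s t φ ω ((m+1:ℝ)⁻¹)) ≤ (ε : ℝ≥0∞) := by
    have hma : (0:ℝ) < ((m:ℝ)+1)⁻¹ := by positivity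
    rw [GG_eq s t φ ω _ hma]
    have hdist : dist (((m:ℝ)+1)⁻¹) 0 < δ := by
      rw [Real.dist_eq, sub_zero, abs_of_pos hma]; exact ham
    have := hball hdist
    calc ENNReal.ofReal (4 * (Wt s t (((m:ℝ)+1)⁻¹) * (((m:ℝ)+1)⁻¹) * (φ ((((m:ℝ)+1)⁻¹) • ω)) ^ 2))
        ≤ ENNReal.ofReal ((ε:ℝ)) := ENNReal.ofReal_le_ofReal (by linarith)
      _ = (ε : ℝ≥0∞) := ENNReal.ofReal_coe_nnreal
  calc ∫⁻ r in S n, ENNReal.ofReal (Lre s t φ ω r)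
      ≤ ∫⁻ r in S m, ENNReal.ofReal (Lre s t φ ω r) := lintegral_mono_set hsub
    _ ≤ ENNReal.ofReal (4 * GG s t φ ω ((m+1:ℝ)⁻¹)) + R := claim1 m
    _ ≤ (ε : ℝ≥0∞) + R := by gcongr
    _ = R + ε := by rw [add_comm]

theorem polar (f : E3 → ℝ≥0∞) (hf : Measurable f) :
    (∫⁻ x, f x) = ∫⁻ ω : Metric.sphere (0:E3) 1, ∫⁻ r : Ioi (0:ℝ),
      f (r.1 • (ω : E3)) ∂(Measure.volumeIoiPow 2) ∂(volume : Measure E3).toSphere := by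
  have h0 : (volume : Measure E3) {0} = 0 := measure_singleton 0
  have hc : MeasurableSet ({0}ᶜ : Set E3) := (measurableSet_singleton 0).compl
  have mp := Measure.measurePreserving_homeomorphUnitSphereProd (volume : Measure E3)
  have hdim : Module.finrank ℝ E3 - 1 = 2 := by simp
  rw [hdim] at mp
  have hFmeas : Measurable (fun p : Metric.sphere (0:E3) 1 × Ioi (0:ℝ) => f (p.2.1 • (p.1 : E3))) := by
    exact hf.comp (by fun_prop)
  have key : ∫⁻ x : ({0}ᶜ : Set E3), f x ∂((volume : Measure E3).comap (↑))
      = ∫⁻ p : Metric.sphere (0:E3) 1 × Ioi (0:ℝ), f (p.2.1 • (p.1 : E3))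
          ∂(((volume : Measure E3).toSphere).prod (Measure.volumeIoiPow 2)) := by
    rw [← mp.lintegral_comp hFmeas]
    refine lintegral_congr fun x => ?_
    have hx : (x : E3) ≠ 0 := x.2
    simp [homeomorphUnitSphereProd, smul_smul, mul_inv_cancel₀ (norm_ne_zero_iff.2 hx)]
  have h1 : (∫⁻ x : E3, f x) = ∫⁻ x in ({0}ᶜ : Set E3), f x := by
    rw [← lintegral_add_compl f hc]
    have h2 : ∫⁻ x in (({0}ᶜ : Set E3))ᶜ, f x ∂volume = 0 := by
      rw [compl_compl]; exact setLIntegral_measure_zero _ _ h0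
    rw [h2, add_zero]
  rw [h1, ← lintegral_subtype_comap hc f, key, lintegral_prod _ hFmeas.aemeasurable]

theorem inner_unfold (f : E3 → ℝ≥0∞) (hf : Measurable f) (ω : E3) :
    (∫⁻ r : Ioi (0:ℝ), f (r.1 • ω) ∂(MeasureTheory.Measure.volumeIoiPow 2))
      = ∫⁻ r in Ioi (0:ℝ), ENNReal.ofReal (r ^ 2) * f (r • ω) := by
  have hdens : Measurable fun r : Ioi (0:ℝ) => ENNReal.ofReal ((r:ℝ) ^ 2) :=
    ENNReal.measurable_ofReal.comp (measurable_subtype_coe.pow_const 2)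
  have hg : Measurable fun r : Ioi (0:ℝ) => f ((r:ℝ) • ω) :=
    hf.comp ((continuous_subtype_val.smul continuous_const).measurable)
  rw [Measure.volumeIoiPow, lintegral_withDensity_eq_lintegral_mul _ hdens hg,
    ← lintegral_subtype_comap (measurableSet_Ioi (a := (0:ℝ)))
      (fun r : ℝ => ENNReal.ofReal (r ^ 2) * f (r • ω))]
  exact lintegral_congr fun x => rfl

end WH

/-- weighted Hardy-type inequality, Lemma 2.11:
`∫ ⟨t-r⟩^{2s} φ² dx/r² ≲ ∫ ⟨t-r⟩^{2s-2} φ² dx + ∫ ⟨t-r⟩^{2s}(∂_r(rφ))² dx/r²`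
provided `lim_{R→∞} sup_{|x|=R} ⟨t-R⟩^{2s} R φ(x)² = 0`. -/
theorem weighted_hardy_zeroth_order (s : ℝ) (hs : 1 ≤ s) :
    ∃ C > 0, ∀ t : ℝ, ∀ φ : E3 → ℝ, ContDiff ℝ 1 φ →
      (∀ ε > 0, ∃ R₀ : ℝ, ∀ R : ℝ, R₀ ≤ R → ∀ x : E3, ‖x‖ = R →
        jb (t - R) ^ (2 * s) * R * (φ x) ^ 2 ≤ ε) →
      Integrable (fun x : E3 => jb (t - ‖x‖) ^ (2 * s - 2) * (φ x) ^ 2) →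
      Integrable (fun x : E3 =>
        jb (t - ‖x‖) ^ (2 * s) * (prS (fun y => ‖y‖ * φ y) x) ^ 2 / ‖x‖ ^ 2) →
      (∫ x : E3, jb (t - ‖x‖) ^ (2 * s) * (φ x) ^ 2 / ‖x‖ ^ 2)
        ≤ C * ((∫ x : E3, jb (t - ‖x‖) ^ (2 * s - 2) * (φ x) ^ 2)
            + ∫ x : E3, jb (t - ‖x‖) ^ (2 * s) * (prS (fun y => ‖y‖ * φ y) x) ^ 2 / ‖x‖ ^ 2) := by
  refine ⟨16 * s ^ 2 + 8, by positivity, ?_⟩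
  intro t φ hφ _hdecay hA hB
  have hjbnn : ∀ (q p : ℝ), 0 ≤ jb q ^ p := fun q p => Real.rpow_nonneg (WH.jb_pos q).le p
  set g : E3 → ℝ := fun y => ‖y‖ * φ y with hg
  set AI : E3 → ℝ := fun x => jb (t - ‖x‖) ^ (2 * s - 2) * (φ x) ^ 2 with hAI
  set BI : E3 → ℝ := fun x => jb (t - ‖x‖) ^ (2 * s) * (prS g x) ^ 2 / ‖x‖ ^ 2 with hBI
  set LI : E3 → ℝ := fun x => jb (t - ‖x‖) ^ (2 * s) * (φ x) ^ 2 / ‖x‖ ^ 2 with hLI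
  set RI : E3 → ℝ := fun x => 16 * s ^ 2 * AI x + 8 * BI x with hRI
  have hAnn : ∀ x, 0 ≤ AI x := fun x => mul_nonneg (hjbnn _ _) (sq_nonneg _)
  have hBnn : ∀ x, 0 ≤ BI x := fun x =>
    div_nonneg (mul_nonneg (hjbnn _ _) (sq_nonneg _)) (sq_nonneg _)
  have hLnn : ∀ x, 0 ≤ LI x := fun x =>
    div_nonneg (mul_nonneg (hjbnn _ _) (sq_nonneg _)) (sq_nonneg _)
  have mφ : Measurable φ := hφ.continuous.measurable
  have mjb : ∀ p : ℝ, Measurable fun x : E3 => jb (t - ‖x‖) ^ p := fun p =>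
    ((WH.jb_continuous.comp (continuous_const.sub continuous_norm)).rpow_const
      (fun x => Or.inl (WH.jb_pos _).ne')).measurable
  have mprS : Measurable (prS g) := by
    unfold prS
    apply Finset.measurable_sum
    intro i _
    exact (((measurable_pi_apply i).comp (WithLp.measurable_ofLp 2 _)).div (measurable_norm : Measurable fun x : E3 => ‖x‖)).mul
      (measurable_fderiv_apply_const ℝ g _)
  have mA : Measurable AI := (mjb (2*s-2)).mul (mφ.pow_const 2)
  have mB : Measurable BI := ((mjb (2*s)).mul (mprS.pow_const 2)).div
    (continuous_norm.measurable.pow_const 2)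
  have mL : Measurable LI := ((mjb (2*s)).mul (mφ.pow_const 2)).div
    (continuous_norm.measurable.pow_const 2)
  have mR : Measurable RI := ((measurable_const.mul mA)).add (measurable_const.mul mB)
  -- key lintegral inequality
  have key : (∫⁻ x : E3, ENNReal.ofReal (LI x)) ≤ ∫⁻ x : E3, ENNReal.ofReal (RI x) := by
    rw [WH.polar (fun x => ENNReal.ofReal (LI x)) (ENNReal.measurable_ofReal.comp mL),
      WH.polar (fun x => ENNReal.ofReal (RI x)) (ENNReal.measurable_ofReal.comp mR)]
    apply lintegral_mono
    intro ω
    dsimp only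
    rw [WH.inner_unfold (fun x => ENNReal.ofReal (LI x)) (ENNReal.measurable_ofReal.comp mL) (ω : E3),
      WH.inner_unfold (fun x => ENNReal.ofReal (RI x)) (ENNReal.measurable_ofReal.comp mR) (ω : E3)]
    have hω : ‖(ω : E3)‖ = 1 := mem_sphere_zero_iff_norm.1 ω.2
    have e1 : ∀ r ∈ Ioi (0:ℝ), ENNReal.ofReal (r ^ 2) * ENNReal.ofReal (LI (r • (ω : E3)))
        = ENNReal.ofReal (WH.Lre s t φ ω r) := by
      intro r hr
      have hr0 : (0:ℝ) < r := hr
      have hn : ‖(r • (ω : E3) : E3)‖ = r := by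
        rw [norm_smul, hω, Real.norm_eq_abs, abs_of_pos hr0, mul_one]
      rw [← ENNReal.ofReal_mul (by positivity)]
      congr 1
      show r ^ 2 * (jb (t - ‖(r • (ω:E3) : E3)‖) ^ (2 * s) * (φ (r • (ω:E3))) ^ 2
        / ‖(r • (ω:E3) : E3)‖ ^ 2) = WH.Lre s t φ ω r
      rw [hn]
      unfold WH.Lre WH.Wt
      field_simp
    have e2 : ∀ r ∈ Ioi (0:ℝ), ENNReal.ofReal (r ^ 2) * ENNReal.ofReal (RI (r • (ω : E3)))
        = ENNReal.ofReal (WH.Hre s t φ ω r) := by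
      intro r hr
      have hr0 : (0:ℝ) < r := hr
      have hn : ‖(r • (ω : E3) : E3)‖ = r := by
        rw [norm_smul, hω, Real.norm_eq_abs, abs_of_pos hr0, mul_one]
      rw [← ENNReal.ofReal_mul (by positivity)]
      congr 1
      show r ^ 2 * (16 * s ^ 2 * (jb (t - ‖(r • (ω:E3) : E3)‖) ^ (2 * s - 2)
            * (φ (r • (ω:E3))) ^ 2)
          + 8 * (jb (t - ‖(r • (ω:E3) : E3)‖) ^ (2 * s) * (prS g (r • (ω:E3))) ^ 2
            / ‖(r • (ω:E3) : E3)‖ ^ 2)) = WH.Hre s t φ ω r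
      rw [hn, WH.prS_eq_vv φ hφ (ω : E3) hω r hr0]
      unfold WH.Hre WH.Wt WH.uu
      field_simp
    rw [setLIntegral_congr_fun measurableSet_Ioi e1,
      setLIntegral_congr_fun measurableSet_Ioi e2]
    exact WH.radial_lin s t hs φ hφ (ω : E3)
  -- convert to Bochner integrals
  have hAeq : (∫⁻ x : E3, ENNReal.ofReal (AI x)) = ENNReal.ofReal (∫ x : E3, AI x) :=
    (ofReal_integral_eq_lintegral_ofReal hA (ae_of_all _ hAnn)).symm
  have hBeq : (∫⁻ x : E3, ENNReal.ofReal (BI x)) = ENNReal.ofReal (∫ x : E3, BI x) :=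
    (ofReal_integral_eq_lintegral_ofReal hB (ae_of_all _ hBnn)).symm
  have hRsplit : (∫⁻ x : E3, ENNReal.ofReal (RI x))
      = ENNReal.ofReal (16 * s ^ 2) * (∫⁻ x : E3, ENNReal.ofReal (AI x))
        + ENNReal.ofReal 8 * (∫⁻ x : E3, ENNReal.ofReal (BI x)) := by
    have hmA' : Measurable fun x : E3 => ENNReal.ofReal (AI x) :=
      ENNReal.measurable_ofReal.comp mA
    have hmB' : Measurable fun x : E3 => ENNReal.ofReal (BI x) :=
      ENNReal.measurable_ofReal.comp mB
    rw [← lintegral_const_mul _ hmA', ← lintegral_const_mul _ hmB',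
      ← lintegral_add_left (hmA'.const_mul _)]
    apply lintegral_congr
    intro x
    rw [← ENNReal.ofReal_mul (p := 16 * s ^ 2) (by positivity),
      ← ENNReal.ofReal_mul (p := (8:ℝ)) (by norm_num),
      ← ENNReal.ofReal_add (mul_nonneg (by positivity) (hAnn x))
        (mul_nonneg (by norm_num) (hBnn x))]
  have hRfin : (∫⁻ x : E3, ENNReal.ofReal (RI x)) ≠ ⊤ := by
    rw [hRsplit, hAeq, hBeq]
    exact ENNReal.add_ne_top.2
      ⟨ENNReal.mul_ne_top ENNReal.ofReal_ne_top ENNReal.ofReal_ne_top,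
       ENNReal.mul_ne_top ENNReal.ofReal_ne_top ENNReal.ofReal_ne_top⟩
  have hLeq : (∫ x : E3, LI x) = (∫⁻ x : E3, ENNReal.ofReal (LI x)).toReal :=
    integral_eq_lintegral_of_nonneg_ae (ae_of_all _ hLnn) mL.aestronglyMeasurable
  have hAint : 0 ≤ ∫ x : E3, AI x := integral_nonneg hAnn
  have hBint : 0 ≤ ∫ x : E3, BI x := integral_nonneg hBnn
  have step : (∫ x : E3, LI x) ≤ 16 * s ^ 2 * (∫ x : E3, AI x) + 8 * (∫ x : E3, BI x) := by
    rw [hLeq]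
    have h1 := ENNReal.toReal_mono hRfin key
    apply le_trans h1
    rw [hRsplit, hAeq, hBeq, ← ENNReal.ofReal_mul (by positivity),
      ← ENNReal.ofReal_mul (by norm_num),
      ← ENNReal.ofReal_add (by positivity) (by positivity : (0:ℝ) ≤ 8 * ∫ x : E3, BI x),
      ENNReal.toReal_ofReal (by positivity)]
  calc (∫ x : E3, LI x) ≤ 16 * s ^ 2 * (∫ x : E3, AI x) + 8 * (∫ x : E3, BI x) := step
    _ ≤ (16 * s ^ 2 + 8) * ((∫ x : E3, AI x) + ∫ x : E3, BI x) := by nlinarith [sq_nonneg s]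

end
end

section
/- (Interior decay at the origin from cone fluxes.) Let γ ≥ −1/2 and 1 ≤ t₁ < t₂, and let v be a smooth function on [t₁,t₂] × ℝ³ with v(t₂,·) = ∂_t v(t₂,·) = 0. Then t₁^{1+γ} |v(t₁,0)| ≤ C Σ_{|I|≤3} ( ∫_{t₁}^{t₂} ∫_{|x| = t − t₁} |∂̄ Z^I v|² w₋^γ dS dt )^{1/2}, where the inner integral is over the sphere of radius t − t₁ with surface measure dS, w₋^γ = (1 + (t−r)₊)^{1+2γ} (which equals (1+t₁)^{1+2γ} on this cone), and C depends only on γ. -/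
noncomputable section

open Real MeasureTheory Filter Set

/-! ### Auxiliary lemmas for `interior_decay_at_origin` -/

lemma IDA_sum_single (w : E3) : ∑ i, w i • EuclideanSpace.single i (1:ℝ) = w := by
  ext j
  rw [show ((∑ i, w i • EuclideanSpace.single i (1:ℝ)) j)
      = ∑ i, (w i • EuclideanSpace.single i (1:ℝ)) j from by rw [WithLp.ofLp_sum, Finset.sum_apply]]
  simp [EuclideanSpace.single_apply]

lemma IDA_norm_sq (x : E3) : ∑ i, x i ^ 2 = ‖x‖ ^ 2 := by
  rw [EuclideanSpace.norm_eq, Real.sq_sqrt (by positivity)]; simp [sq_abs]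

lemma IDA_sum_sq {w : E3} (hw : ‖w‖ = 1) : ∑ i, w i ^ 2 = 1 := by
  rw [IDA_norm_sq, hw]; norm_num

lemma IDA_fderiv_pair (φ : Spt → ℝ) (p : Spt) (w : E3) :
    fderiv ℝ φ p (1, w) = pt φ p + ∑ i, w i * px i φ p := by
  have h : ((1:ℝ), w) = ((1:ℝ), (0:E3)) + ∑ i, w i • ((0:ℝ), EuclideanSpace.single i (1:ℝ)) := by
    have h2 : (∑ i, w i • ((0:ℝ), EuclideanSpace.single i (1:ℝ)))
        = (((0:ℝ), w) : ℝ × E3) := by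
      rw [Prod.ext_iff]
      refine ⟨?_, ?_⟩
      · rw [Prod.fst_sum]; simp
      · rw [Prod.snd_sum]; simpa using IDA_sum_single w
    rw [h2, Prod.mk_add_mk]; simp
  rw [h, map_add, map_sum]
  simp only [ContinuousLinearMap.map_smul, smul_eq_mul]
  simp [pt, px]

lemma IDA_pr_cone (φ : Spt → ℝ) {t₁ t : ℝ} (h : t₁ < t) {w : E3} (hw : ‖w‖ = 1) :
    pr φ (t, (t - t₁) • w) = ∑ i, w i * px i φ (t, (t - t₁) • w) := by
  unfold pr
  apply Finset.sum_congr rfl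
  intro i _
  congr 1
  show ((t - t₁) • w) i / ‖(t - t₁) • w‖ = w i
  rw [norm_smul, hw, PiLp.smul_apply, smul_eq_mul]
  rw [Real.norm_eq_abs, abs_of_pos (by linarith), mul_one]
  exact mul_div_cancel_left₀ _ (by linarith)

lemma IDA_angSq_nonneg (φ : Spt → ℝ) (p : Spt) : 0 ≤ angSq φ p := by
  unfold angSq gradSq
  have h1 : (pr φ p) ^ 2 ≤ (∑ i, (p.2 i / ‖p.2‖) ^ 2) * ∑ i, (px i φ p) ^ 2 :=
    Finset.sum_mul_sq_le_sq_mul_sq _ _ _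
  have h2 : (∑ i, (p.2 i / ‖p.2‖) ^ 2) ≤ 1 := by
    rcases eq_or_ne (p.2 : E3) 0 with h | h
    · simp [h]
    · have hn : ‖p.2‖ ≠ 0 := norm_ne_zero_iff.mpr h
      have : (∑ i, (p.2 i / ‖p.2‖) ^ 2) = (∑ i, (p.2 i) ^ 2) / ‖p.2‖ ^ 2 := by
        rw [Finset.sum_div]; exact Finset.sum_congr rfl fun i _ => by rw [div_pow]
      rw [this, IDA_norm_sq, div_self (by positivity)]
  nlinarith [Finset.sum_nonneg (fun i (_ : i ∈ Finset.univ) => sq_nonneg (px i φ p))]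

lemma IDA_tanSq_nonneg (φ : Spt → ℝ) (p : Spt) : 0 ≤ tanSq φ p :=
  add_nonneg (sq_nonneg _) (IDA_angSq_nonneg φ p)

lemma IDA_sqrt_add (a b : ℝ) : Real.sqrt (a + b) ≤ Real.sqrt a + Real.sqrt b := by
  have h : a + b ≤ (Real.sqrt a + Real.sqrt b) ^ 2 := by
    rcases le_or_gt a 0 with ha | ha
    · rcases le_or_gt b 0 with hb | hb
      · nlinarith [Real.sqrt_nonneg a, Real.sqrt_nonneg b]
      · nlinarith [Real.sq_sqrt hb.le, Real.sqrt_nonneg a, Real.sqrt_nonneg b]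
    · rcases le_or_gt b 0 with hb | hb
      · nlinarith [Real.sq_sqrt ha.le, Real.sqrt_nonneg a, Real.sqrt_nonneg b]
      · nlinarith [Real.sq_sqrt ha.le, Real.sq_sqrt hb.le, Real.sqrt_nonneg a, Real.sqrt_nonneg b]
  calc Real.sqrt (a + b) ≤ Real.sqrt ((Real.sqrt a + Real.sqrt b)^2) := Real.sqrt_le_sqrt h
  _ = Real.sqrt a + Real.sqrt b := Real.sqrt_sq (by positivity)

lemma IDA_K_bound {t₁ t : ℝ} (h1 : 1 ≤ t₁) (ht : t₁ ≤ t) :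
    (Real.log (2*t - t₁) - Real.log t₁) / 2
      ≤ 4 * (t - t₁) * (t₁ ^ ((1:ℝ)/4))⁻¹ * (t ^ ((3:ℝ)/4))⁻¹ := by
  have ht₁0 : (0:ℝ) < t₁ := by linarith
  have ht0 : (0:ℝ) < t := by linarith
  have h2t : (0:ℝ) < 2*t - t₁ := by linarith
  set b : ℝ := (2*t - t₁)/t₁ with hbdef
  have hb1 : 1 ≤ b := (one_le_div ht₁0).mpr (by linarith)
  have hb0 : 0 < b := by linarith
  set z : ℝ := b ^ ((1:ℝ)/4) with hzdef
  have hz1 : 1 ≤ z := Real.one_le_rpow hb1 (by norm_num)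
  have hz0 : 0 < z := by linarith
  have hz4 : z ^ (4:ℕ) = b := by
    rw [hzdef, ← Real.rpow_natCast (b ^ ((1:ℝ)/4)) 4, ← Real.rpow_mul hb0.le]
    norm_num
  have hlog : Real.log (2*t - t₁) - Real.log t₁ = Real.log b := by
    rw [hbdef, Real.log_div (by linarith) (by linarith)]
  have hlogz : Real.log b = 4 * Real.log z := by
    rw [hzdef, Real.log_rpow hb0]; ring
  have hlz : Real.log z ≤ z - 1 := Real.log_le_sub_one_of_pos hz0
  have key : z - 1 ≤ (b - 1) * (z⁻¹)^3 := by
    have h3 : ((z ^ (4:ℕ)) - 1) * (z⁻¹)^3 = z - (z⁻¹)^3 := by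
      field_simp
    rw [← hz4, h3]
    have : (z⁻¹)^3 ≤ 1 := pow_le_one₀ (by positivity) (inv_le_one_of_one_le₀ hz1)
    linarith
  have hzinv : (z⁻¹)^3 = b ^ (-(3:ℝ)/4) := by
    rw [hzdef, ← Real.rpow_neg_one (b ^ ((1:ℝ)/4)), ← Real.rpow_natCast _ 3,
      ← Real.rpow_mul hb0.le, ← Real.rpow_mul hb0.le]
    norm_num
  have hbt : t/t₁ ≤ b := by
    rw [hbdef]; gcongr; linarith
  have htt0 : 0 < t/t₁ := by positivity
  have hmono : b ^ (-(3:ℝ)/4) ≤ (t/t₁) ^ (-(3:ℝ)/4) :=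
    Real.rpow_le_rpow_of_nonpos htt0 hbt (by norm_num)
  have hsplit : (t/t₁) ^ (-(3:ℝ)/4) = t₁ ^ ((3:ℝ)/4) * (t ^ ((3:ℝ)/4))⁻¹ := by
    rw [Real.div_rpow ht0.le ht₁0.le, show (-3/4 : ℝ) = -((3:ℝ)/4) by norm_num,
      Real.rpow_neg ht0.le, Real.rpow_neg ht₁0.le]
    field_simp
  have hq : t₁ ^ ((3:ℝ)/4) = t₁ * (t₁ ^ ((1:ℝ)/4))⁻¹ := by
    rw [← Real.rpow_neg ht₁0.le]
    nth_rewrite 2 [← Real.rpow_one t₁]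
    rw [← Real.rpow_add ht₁0]
    norm_num
  have hb1' : b - 1 = 2*(t-t₁)/t₁ := by
    rw [hbdef]; field_simp; ring
  have hzb : (z⁻¹)^3 ≤ t₁ ^ ((3:ℝ)/4) * (t ^ ((3:ℝ)/4))⁻¹ := by
    rw [hzinv, ← hsplit]; exact hmono
  have hb1nonneg : (0:ℝ) ≤ b - 1 := by linarith
  calc (Real.log (2*t - t₁) - Real.log t₁)/2 = (Real.log b)/2 := by rw [hlog]
    _ = 2 * Real.log z := by rw [hlogz]; ring
    _ ≤ 2*(z-1) := by linarith
    _ ≤ 2*((b-1) * (z⁻¹)^3) := by linarith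
    _ ≤ 2*((b-1) * (t₁ ^ ((3:ℝ)/4) * (t ^ ((3:ℝ)/4))⁻¹)) := by
        have := mul_le_mul_of_nonneg_left hzb hb1nonneg
        linarith
    _ = 4 * (t - t₁) * (t₁ ^ ((1:ℝ)/4))⁻¹ * (t ^ ((3:ℝ)/4))⁻¹ := by
        rw [hb1', hq]
        field_simp
        ring

lemma IDA_cs {α : Type*} [MeasurableSpace α] (μ : MeasureTheory.Measure α) (f g : α → ℝ)
    (hf : MeasureTheory.MemLp f 2 μ) (hg : MeasureTheory.MemLp g 2 μ) :
    |∫ a, f a * g a ∂μ| ≤ Real.sqrt (∫ a, f a ^ 2 ∂μ) * Real.sqrt (∫ a, g a ^ 2 ∂μ) := by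
  have h2 : ENNReal.ofReal (2:ℝ) = 2 := by norm_num
  have hconj : (2:ℝ).HolderConjugate 2 := ⟨by norm_num, by norm_num, by norm_num⟩
  have key := MeasureTheory.integral_mul_norm_le_Lp_mul_Lq (μ := μ) hconj (h2 ▸ hf) (h2 ▸ hg)
  have habs : ∀ x : ℝ, ‖x‖ ^ (2:ℝ) = x ^ 2 := fun x => by
    rw [show (2:ℝ) = ((2:ℕ):ℝ) by norm_num, Real.rpow_natCast]
    simp [sq_abs]
  simp only [habs] at key
  calc |∫ a, f a * g a ∂μ| ≤ ∫ a, ‖f a * g a‖ ∂μ := by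
        rw [← Real.norm_eq_abs]; exact MeasureTheory.norm_integral_le_integral_norm _
    _ = ∫ a, ‖f a‖ * ‖g a‖ ∂μ := by
        apply MeasureTheory.integral_congr_ae; filter_upwards with a; exact norm_mul _ _
    _ ≤ (∫ a, f a ^ 2 ∂μ) ^ ((1:ℝ)/2) * (∫ a, g a ^ 2 ∂μ) ^ ((1:ℝ)/2) := key
    _ = Real.sqrt (∫ a, f a ^ 2 ∂μ) * Real.sqrt (∫ a, g a ^ 2 ∂μ) := by
        rw [Real.sqrt_eq_rpow, Real.sqrt_eq_rpow]

lemma IDA_deriv_smooth {v : Spt → ℝ} {U : Set Spt} (hU : IsOpen U)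
    (hv : ContDiffOn ℝ (⊤:ℕ∞) v U) :
    (ContDiffOn ℝ (⊤:ℕ∞) (pt v) U) ∧ (∀ i, ContDiffOn ℝ (⊤:ℕ∞) (px i v) U) := by
  have hD : ContDiffOn ℝ (⊤:ℕ∞) (fderiv ℝ v) U :=
    hv.fderiv_of_isOpen hU (by simp)
  exact ⟨hD.clm_apply contDiffOn_const, fun i => hD.clm_apply contDiffOn_const⟩

lemma IDA_coord_smooth (i : Fin 3) : ContDiff ℝ (⊤:ℕ∞) (fun p : Spt => p.2 i) :=
  ((EuclideanSpace.proj (𝕜 := ℝ) i).comp (ContinuousLinearMap.snd ℝ ℝ E3)).contDiff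

lemma IDA_smooth_scal {v : Spt → ℝ} {U : Set Spt} (hU : IsOpen U)
    (hv : ContDiffOn ℝ (⊤:ℕ∞) v U) :
    ContDiffOn ℝ (⊤:ℕ∞) (VF.app VF.scal v) U := by
  obtain ⟨hpt, hpx⟩ := IDA_deriv_smooth hU hv
  show ContDiffOn ℝ (⊤:ℕ∞) (fun p => p.1 * pt v p + ∑ i, p.2 i * px i v p) U
  exact ((contDiff_fst.contDiffOn).mul hpt).add
    (ContDiffOn.sum fun i _ => ((IDA_coord_smooth i).contDiffOn).mul (hpx i))

lemma IDA_smooth_boost {v : Spt → ℝ} {U : Set Spt} (hU : IsOpen U)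
    (hv : ContDiffOn ℝ (⊤:ℕ∞) v U) (i : Fin 3) :
    ContDiffOn ℝ (⊤:ℕ∞) (VF.app (VF.boost i) v) U := by
  obtain ⟨hpt, hpx⟩ := IDA_deriv_smooth hU hv
  show ContDiffOn ℝ (⊤:ℕ∞) (fun p => p.2 i * pt v p + p.1 * px i v p) U
  exact (((IDA_coord_smooth i).contDiffOn).mul hpt).add
    ((contDiff_fst.contDiffOn).mul (hpx i))

lemma IDA_px_zero {v : Spt → ℝ} {t₂ : ℝ} (x : E3)
    (hd : DifferentiableAt ℝ v (t₂, x)) (hb : ∀ y : E3, v (t₂, y) = 0) (i : Fin 3) :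
    px i v (t₂, x) = 0 := by
  have hι : HasFDerivAt (fun y : E3 => ((t₂, y) : Spt))
      (((0 : E3 →L[ℝ] ℝ)).prod (ContinuousLinearMap.id ℝ E3)) x :=
    (hasFDerivAt_const t₂ x).prodMk (hasFDerivAt_id x)
  have hcomp := hd.hasFDerivAt.comp x hι
  have hzero : HasFDerivAt (fun y : E3 => v (t₂, y)) (0 : E3 →L[ℝ] ℝ) x := by
    have : (fun y : E3 => v (t₂, y)) = fun _ => (0:ℝ) := funext hb
    rw [this]; exact hasFDerivAt_const 0 x
  have huniq := hcomp.unique hzero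
  have := congrArg (fun L : E3 →L[ℝ] ℝ => L (EuclideanSpace.single i 1)) huniq
  simpa [px, ContinuousLinearMap.comp_apply, ContinuousLinearMap.prod_apply] using this

lemma IDA_quad (a b0 b1 b2 w0 w1 w2 : ℝ) (h : w0^2 + w1^2 + w2^2 = 1) :
    (a + (w0*b0 + w1*b1 + w2*b2))^2 ≤ 4*(a^2 + (b0^2 + b1^2 + b2^2)) := by
  nlinarith [sq_nonneg (b0 - w0*a), sq_nonneg (b1 - w1*a), sq_nonneg (b2 - w2*a),
    sq_nonneg (w0*b1 - w1*b0), sq_nonneg (w0*b2 - w2*b0), sq_nonneg (w1*b2 - w2*b1),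
    sq_nonneg a, sq_nonneg b0, sq_nonneg b1, sq_nonneg b2]

set_option maxHeartbeats 1000000 in
/-- Interior decay at the origin from cone fluxes, Lemma 3.4:
`t₁^{1+γ} |v(t₁,0)| ≤ C Σ_{|I|≤3} (∫_{t₁}^{t₂} ∫_{|x|=t-t₁} |∂̄Z^I v|² w₋^γ dS dt)^{1/2}`
for `v` vanishing to first order at `t = t₂`. -/
theorem interior_decay_at_origin (γ : ℝ) (hγ : -(1/2 : ℝ) ≤ γ) :
    ∃ C > 0, ∀ t₁ t₂ : ℝ, 1 ≤ t₁ → t₁ < t₂ →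
      ∀ v : Spt → ℝ, ∀ U : Set Spt, IsOpen U →
        Set.Icc t₁ t₂ ×ˢ (Set.univ : Set E3) ⊆ U → ContDiffOn ℝ (⊤ : ℕ∞) v U →
        (∀ x : E3, v (t₂, x) = 0 ∧ pt v (t₂, x) = 0) →
        t₁ ^ (1 + γ) * |v (t₁, (0 : E3))|
          ≤ C * ∑ m ∈ Finset.range 4, ∑ I : Fin m → VF,
              Real.sqrt (∫ t in t₁..t₂, (t - t₁) ^ 2 *
                ∫ ω : Sph, tanSq (Zop I v) (t, (t - t₁) • (ω : E3))
                  * (1 + max (t - (t - t₁)) 0) ^ (1 + 2 * γ)) := by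
  haveI hfinS : IsFiniteMeasure (volume : Measure Sph) :=
    inferInstanceAs (IsFiniteMeasure (volume : Measure E3).toSphere)
  set σ : ℝ := ((volume : Measure Sph) Set.univ).toReal with hσdef
  have hσpos : 0 < σ := by
    apply ENNReal.toReal_pos _ (measure_ne_top _ _)
    have h1 : (volume : Measure Sph) Set.univ
        = (Module.finrank ℝ E3 : ENNReal) * volume (Metric.ball (0:E3) 1) :=
      MeasureTheory.Measure.toSphere_apply_univ _
    rw [h1]
    refine mul_ne_zero ?_ ?_
    · simp [finrank_euclideanSpace]
    · exact ((Metric.isOpen_ball).measure_pos volume (Metric.nonempty_ball.mpr one_pos)).ne'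
  refine ⟨2 * Real.sqrt (32 * σ) / σ + 1, by positivity, ?_⟩
  intro t₁ t₂ ht₁ ht12 v U hUopen hsub hv hbc
  have ht₁0 : (0:ℝ) < t₁ := lt_of_lt_of_le one_pos ht₁
  have hle : t₁ ≤ t₂ := ht12.le
  set W : ℝ := (1 + t₁) ^ (1 + 2*γ) with hWdef
  have hWpos : 0 < W := Real.rpow_pos_of_pos (by linarith) _
  set sw : ℝ := Real.sqrt W with hswdef
  have hswpos : 0 < sw := Real.sqrt_pos.mpr hWpos
  have hsw2 : sw ^ 2 = W := Real.sq_sqrt hWpos.le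
  have hmemU : ∀ t : ℝ, ∀ x : E3, t₁ ≤ t → t ≤ t₂ → ((t, x) : Spt) ∈ U :=
    fun t x h h' => hsub ⟨⟨h, h'⟩, Set.mem_univ x⟩
  have hvD : ∀ p ∈ U, DifferentiableAt ℝ v p := fun p hp =>
    (hv.contDiffAt (hUopen.mem_nhds hp)).differentiableAt (by simp)
  have hfdC : ContinuousOn (fderiv ℝ v) U :=
    hv.continuousOn_fderiv_of_isOpen hUopen (by simp)
  -- boundary values
  have hv0 : ∀ x : E3, v (t₂, x) = 0 := fun x => (hbc x).1
  have hpt0 : ∀ x : E3, pt v (t₂, x) = 0 := fun x => (hbc x).2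
  have hpx0 : ∀ (i : Fin 3) (x : E3), px i v (t₂, x) = 0 := fun i x =>
    IDA_px_zero x (hvD _ (hmemU t₂ x hle le_rfl)) hv0 i
  set Zs : Spt → ℝ := VF.app VF.scal v with hZsdef
  set Zb : Fin 3 → Spt → ℝ := fun i => VF.app (VF.boost i) v with hZbdef
  have hscal0 : ∀ x : E3, Zs (t₂, x) = 0 := by
    intro x
    show (t₂, x).1 * pt v (t₂, x) + ∑ i, (t₂, x).2 i * px i v (t₂, x) = 0
    simp [hpt0 x, hpx0]
  have hboost0 : ∀ (i : Fin 3) (x : E3), Zb i (t₂, x) = 0 := by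
    intro i x
    show (t₂, x).2 i * pt v (t₂, x) + (t₂, x).1 * px i v (t₂, x) = 0
    simp [hpt0 x, hpx0]
  -- smoothness of the commuted fields
  have hZsS : ContDiffOn ℝ (⊤:ℕ∞) Zs U := IDA_smooth_scal hUopen hv
  have hZbS : ∀ i, ContDiffOn ℝ (⊤:ℕ∞) (Zb i) U := fun i => IDA_smooth_boost hUopen hv i
  have hZsD : ∀ p ∈ U, DifferentiableAt ℝ Zs p := fun p hp =>
    (hZsS.contDiffAt (hUopen.mem_nhds hp)).differentiableAt (by simp)
  have hZbD : ∀ i, ∀ p ∈ U, DifferentiableAt ℝ (Zb i) p := fun i p hp =>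
    ((hZbS i).contDiffAt (hUopen.mem_nhds hp)).differentiableAt (by simp)
  have hZsfC : ContinuousOn (fderiv ℝ Zs) U :=
    hZsS.continuousOn_fderiv_of_isOpen hUopen (by simp)
  have hZbfC : ∀ i, ContinuousOn (fderiv ℝ (Zb i)) U :=
    fun i => (hZbS i).continuousOn_fderiv_of_isOpen hUopen (by simp)
  set K : ℝ → ℝ := fun t => (Real.log (2*t - t₁) - Real.log t₁)/2 with hKdef
  set EE : Sph × ℝ → ℝ := fun q =>
    fderiv ℝ Zs (q.2, (q.2 - t₁) • (q.1:E3)) (1, (q.1:E3))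
      + ∑ i, (q.1:E3) i * fderiv ℝ (Zb i) (q.2, (q.2 - t₁) • (q.1:E3)) (1, (q.1:E3)) with hEEdef
  -- THE KEY IDENTITY
  have key : ∀ ω : Sph, v (t₁, (0:E3)) = ∫ t in t₁..t₂, K t * EE (ω, t) := by
    intro ω
    have hw : ‖(ω:E3)‖ = 1 := by
      have h := ω.2
      rw [mem_sphere_iff_norm] at h
      simpa using h
    set w : E3 := (ω : E3) with hwdef
    have hsumsq : ∑ i, w i ^ 2 = 1 := IDA_sum_sq hw
    set c : ℝ → Spt := fun t => ((t, (t - t₁) • w) : Spt) with hcdef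
    have hc : ∀ t : ℝ, HasDerivAt c ((1 : ℝ), w) t := by
      intro t
      have h2 : HasDerivAt (fun s : ℝ => (s - t₁) • w) ((1:ℝ) • w) t :=
        ((hasDerivAt_id t).sub_const t₁).smul_const w
      rw [one_smul] at h2
      exact (hasDerivAt_id t).prodMk h2
    have hccont : Continuous c := by
      apply Continuous.prodMk continuous_id
      exact (continuous_id.sub continuous_const).smul continuous_const
    have hcicc : ∀ t ∈ Set.uIcc t₁ t₂, c t ∈ U := by
      rw [Set.uIcc_of_le hle]
      intro t ht
      exact hmemU t _ ht.1 ht.2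
    have hFTC1 : ∫ t in t₁..t₂, fderiv ℝ v (c t) (1, w) = v (c t₂) - v (c t₁) := by
      apply intervalIntegral.integral_eq_sub_of_hasDerivAt
      · intro t ht
        exact ((hvD (c t) (hcicc t ht)).hasFDerivAt).comp_hasDerivAt t (hc t)
      · apply ContinuousOn.intervalIntegrable
        exact (hfdC.comp hccont.continuousOn hcicc).clm_apply continuousOn_const
    set WW : ℝ → ℝ := fun t => Zs (c t) + ∑ i, w i * Zb i (c t) with hWWdef
    have halg : ∀ t ∈ Set.uIcc t₁ t₂, (2*t - t₁)⁻¹ * WW t = fderiv ℝ v (c t) (1, w) := by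
      intro t ht
      rw [Set.uIcc_of_le hle] at ht
      have h2t : 2*t - t₁ ≠ 0 := by have := ht.1; intro hcon; linarith
      have hcoord : ∀ i, (c t).2 i = (t - t₁) * w i := by
        intro i
        show ((t - t₁) • w) i = _
        rw [PiLp.smul_apply, smul_eq_mul]
      have hP := IDA_fderiv_pair v (c t) w
      have hZsval : Zs (c t) = t * pt v (c t) + (t - t₁) * ∑ i, w i * px i v (c t) := by
        show (c t).1 * pt v (c t) + ∑ i, (c t).2 i * px i v (c t) = _
        rw [Finset.mul_sum]
        congr 1
        apply Finset.sum_congr rfl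
        intro i _
        rw [hcoord i]; ring
      have hZbval : ∀ i, Zb i (c t) = (t - t₁) * w i * pt v (c t) + t * px i v (c t) := by
        intro i
        show (c t).2 i * pt v (c t) + (c t).1 * px i v (c t) = _
        rw [hcoord i]
      have hsum : ∑ i, w i * Zb i (c t)
          = (t - t₁) * pt v (c t) + t * ∑ i, w i * px i v (c t) := by
        calc ∑ i, w i * Zb i (c t)
            = ∑ i, ((t-t₁) * pt v (c t) * w i ^2 + t * (w i * px i v (c t))) := by
              apply Finset.sum_congr rfl; intro i _; rw [hZbval i]; ring
          _ = (t-t₁) * pt v (c t) * (∑ i, w i^2) + t * ∑ i, w i * px i v (c t) := by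
              rw [Finset.sum_add_distrib, ← Finset.mul_sum, ← Finset.mul_sum]
          _ = (t - t₁) * pt v (c t) + t * ∑ i, w i * px i v (c t) := by
              rw [hsumsq]; ring
      rw [hP]
      simp only [hWWdef]
      rw [hZsval, hsum]
      field_simp
      ring
    have hKderiv : ∀ t ∈ Set.uIcc t₁ t₂, HasDerivAt K ((2*t - t₁)⁻¹) t := by
      intro t ht
      rw [Set.uIcc_of_le hle] at ht
      have h2t : (0:ℝ) < 2*t - t₁ := by have := ht.1; linarith
      have h1 : HasDerivAt (fun s : ℝ => 2*s - t₁) 2 t := by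
        simpa using ((hasDerivAt_id t).const_mul 2).sub_const t₁
      have h2 : HasDerivAt (fun s : ℝ => Real.log (2*s - t₁)) (2 / (2*t - t₁)) t :=
        h1.log h2t.ne'
      have h3 := (h2.sub_const (Real.log t₁)).div_const 2
      rw [show (2*t - t₁)⁻¹ = 2 / (2*t - t₁) / 2 by ring]
      exact h3
    have hWWderiv : ∀ t ∈ Set.uIcc t₁ t₂, HasDerivAt WW (EE (ω, t)) t := by
      intro t ht
      have hZsd : HasDerivAt (fun s => Zs (c s)) (fderiv ℝ Zs (c t) (1, w)) t :=
        ((hZsD (c t) (hcicc t ht)).hasFDerivAt).comp_hasDerivAt t (hc t)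
      have hZbd : ∀ i, HasDerivAt (fun s => Zb i (c s)) (fderiv ℝ (Zb i) (c t) (1, w)) t :=
        fun i => ((hZbD i (c t) (hcicc t ht)).hasFDerivAt).comp_hasDerivAt t (hc t)
      have h := hZsd.add (HasDerivAt.sum (u := Finset.univ)
        (fun i _ => (hZbd i).const_mul (w i)))
      rw [show WW = ((fun s => Zs (c s)) + ∑ i, fun y => w i * Zb i (c y)) from by
        ext s; simp [hWWdef, Finset.sum_apply]]
      exact h
    have hWWcont : ContinuousOn WW (Set.uIcc t₁ t₂) := by
      simp only [hWWdef]
      apply ContinuousOn.add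
      · exact (hZsS.continuousOn).comp hccont.continuousOn hcicc
      · apply continuousOn_finset_sum
        intro i _
        exact continuousOn_const.mul (((hZbS i).continuousOn).comp hccont.continuousOn hcicc)
    have hEEcont : ContinuousOn (fun t => EE (ω, t)) (Set.uIcc t₁ t₂) := by
      simp only [hEEdef]
      apply ContinuousOn.add
      · exact ((hZsfC.comp hccont.continuousOn hcicc).clm_apply continuousOn_const)
      · apply continuousOn_finset_sum
        intro i _
        exact continuousOn_const.mul
          (((hZbfC i).comp hccont.continuousOn hcicc).clm_apply continuousOn_const)
    have h2invcont : ContinuousOn (fun t => (2*t - t₁)⁻¹) (Set.uIcc t₁ t₂) := by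
      apply ContinuousOn.inv₀
      · exact (continuous_const.mul continuous_id |>.sub continuous_const).continuousOn
      · intro t ht
        rw [Set.uIcc_of_le hle] at ht
        have := ht.1; intro hcon; linarith
    have hKcont : ContinuousOn K (Set.uIcc t₁ t₂) := by
      simp only [hKdef]
      apply ContinuousOn.div_const
      apply ContinuousOn.sub _ continuousOn_const
      apply ContinuousOn.log
      · exact (continuous_const.mul continuous_id |>.sub continuous_const).continuousOn
      · intro t ht
        rw [Set.uIcc_of_le hle] at ht
        have := ht.1; intro hcon; linarith
    have hint1 : IntervalIntegrable (fun t => (2*t - t₁)⁻¹ * WW t) volume t₁ t₂ :=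
      (h2invcont.mul hWWcont).intervalIntegrable
    have hint2 : IntervalIntegrable (fun t => K t * EE (ω, t)) volume t₁ t₂ :=
      (hKcont.mul hEEcont).intervalIntegrable
    have hFTC2 : ∫ t in t₁..t₂, ((2*t - t₁)⁻¹ * WW t + K t * EE (ω, t))
        = K t₂ * WW t₂ - K t₁ * WW t₁ := by
      apply intervalIntegral.integral_eq_sub_of_hasDerivAt
      · intro t ht
        exact (hKderiv t ht).mul (hWWderiv t ht)
      · exact hint1.add hint2
    have hKt₁ : K t₁ = 0 := by
      simp only [hKdef]
      rw [show 2*t₁ - t₁ = t₁ by ring]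
      simp
    have hWWt₂ : WW t₂ = 0 := by
      simp only [hWWdef, hcdef]
      rw [hscal0]
      simp [hboost0]
    have hsplitInt := intervalIntegral.integral_add hint1 hint2
    have hcongr : ∫ t in t₁..t₂, fderiv ℝ v (c t) (1, w)
        = ∫ t in t₁..t₂, (2*t - t₁)⁻¹ * WW t :=
      intervalIntegral.integral_congr (fun t ht => (halg t ht).symm)
    have hct₁ : c t₁ = ((t₁, (0:E3)) : Spt) := by simp [hcdef]
    have hvt2 : v (c t₂) = 0 := hv0 _
    rw [hsplitInt, hWWt₂, hKt₁] at hFTC2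
    rw [hcongr, hct₁, hvt2] at hFTC1
    linarith
  -- ===== measure-theoretic part =====
  set μS : Measure Sph := volume with hμSdef
  haveI hfinR : IsFiniteMeasure (volume.restrict (Set.Ioc t₁ t₂)) := by
    constructor
    rw [Measure.restrict_apply_univ, Real.volume_Ioc]
    exact ENNReal.ofReal_lt_top
  set ν : Measure (Sph × ℝ) := μS.prod (volume.restrict (Set.Ioc t₁ t₂)) with hνdef
  haveI hνfin : IsFiniteMeasure ν := by rw [hνdef]; infer_instance
  set A : Set (Sph × ℝ) := Set.univ ×ˢ Set.Icc t₁ t₂ with hAdef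
  set A' : Set (Sph × ℝ) := Set.univ ×ˢ Set.Ioc t₁ t₂ with hA'def
  have hA'm : MeasurableSet A' := MeasurableSet.univ.prod measurableSet_Ioc
  have hA'A : A' ⊆ A := Set.prod_mono (le_refl _) Set.Ioc_subset_Icc_self
  have hAcomp : IsCompact A := isCompact_univ.prod isCompact_Icc
  have hνrepr : ν = (μS.prod volume).restrict A' := by
    rw [hνdef, hA'def, ← MeasureTheory.Measure.prod_restrict, Measure.restrict_univ]
  have hae : ∀ᵐ q ∂ν, q ∈ A' := by rw [hνrepr]; exact ae_restrict_mem hA'm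
  have hIntH : ∀ h : Sph × ℝ → ℝ, ContinuousOn h A' → (∀ C, (∀ q ∈ A', |h q| ≤ C) →
      (Integrable h ν ∧ MemLp h 2 ν)) := by
    intro h hc C hC
    have hm : AEStronglyMeasurable h ν := by
      rw [hνrepr]; exact hc.aestronglyMeasurable hA'm
    have hb : ∀ᵐ q ∂ν, ‖h q‖ ≤ C := hae.mono fun q hq => by
      rw [Real.norm_eq_abs]; exact hC q hq
    exact ⟨memLp_one_iff_integrable.mp (MemLp.of_bound hm C hb), MemLp.of_bound hm C hb⟩
  -- continuity infrastructure
  have hcm : Continuous (fun q : Sph × ℝ => ((q.2, (q.2 - t₁) • (q.1:E3)) : Spt)) := by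
    apply Continuous.prodMk continuous_snd
    exact (continuous_snd.sub continuous_const).smul (continuous_subtype_val.comp continuous_fst)
  have hmapsA : ∀ q ∈ A, ((q.2, (q.2 - t₁) • (q.1:E3)) : Spt) ∈ U := by
    rintro ⟨ω, t⟩ hq
    exact hmemU t _ hq.2.1 hq.2.2
  have hmapsA' : ∀ q ∈ A', ((q.2, (q.2 - t₁) • (q.1:E3)) : Spt) ∈ U := fun q hq =>
    hmapsA q (hA'A hq)
  have hcoordcont : ∀ i : Fin 3, Continuous (fun q : Sph × ℝ => (q.1 : E3) i) := fun i =>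
    (EuclideanSpace.proj (𝕜 := ℝ) i).continuous.comp (continuous_subtype_val.comp continuous_fst)
  have hvecc : Continuous (fun q : Sph × ℝ => (((1:ℝ), (q.1:E3)) : Spt)) :=
    continuous_const.prodMk (continuous_subtype_val.comp continuous_fst)
  have hEEcontA : ContinuousOn EE A := by
    simp only [hEEdef]
    apply ContinuousOn.add
    · exact (hZsfC.comp hcm.continuousOn hmapsA).clm_apply hvecc.continuousOn
    · apply continuousOn_finset_sum
      intro i _
      exact ((hcoordcont i).continuousOn).mul
        (((hZbfC i).comp hcm.continuousOn hmapsA).clm_apply hvecc.continuousOn)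
  have hKqcont : ContinuousOn (fun q : Sph × ℝ => K q.2) A := by
    simp only [hKdef]
    apply ContinuousOn.div_const
    apply ContinuousOn.sub _ continuousOn_const
    apply ContinuousOn.log
    · exact (continuous_const.mul continuous_snd |>.sub continuous_const).continuousOn
    · rintro ⟨ω, t⟩ hq
      have h1 : t₁ ≤ t := hq.2.1
      intro hcon; linarith
  have hKnonneg : ∀ t : ℝ, t₁ ≤ t → 0 ≤ K t := by
    intro t ht
    simp only [hKdef]
    have h2 : Real.log t₁ ≤ Real.log (2*t - t₁) :=
      Real.log_le_log ht₁0 (by linarith)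
    linarith
  have hK4 : ∀ t : ℝ, t₁ ≤ t → K t ≤ 4 * (t - t₁) := by
    intro t ht
    have h := IDA_K_bound ht₁ ht
    have ha : (t₁ ^ ((1:ℝ)/4))⁻¹ ≤ 1 :=
      inv_le_one_of_one_le₀ (Real.one_le_rpow ht₁ (by norm_num))
    have hb : (t ^ ((3:ℝ)/4))⁻¹ ≤ 1 :=
      inv_le_one_of_one_le₀ (Real.one_le_rpow (ht₁.trans ht) (by norm_num))
    have ha0 : (0:ℝ) ≤ (t₁ ^ ((1:ℝ)/4))⁻¹ := inv_nonneg.mpr (Real.rpow_nonneg ht₁0.le _)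
    have hb0 : (0:ℝ) ≤ (t ^ ((3:ℝ)/4))⁻¹ :=
      inv_nonneg.mpr (Real.rpow_nonneg (by linarith : (0:ℝ) ≤ t) _)
    have ht0 : (0:ℝ) ≤ t - t₁ := by linarith
    have hab : (t₁ ^ ((1:ℝ)/4))⁻¹ * (t ^ ((3:ℝ)/4))⁻¹ ≤ 1 := mul_le_one₀ ha hb0 hb
    simp only [hKdef] at h ⊢
    nlinarith [mul_le_mul_of_nonneg_left hab (mul_nonneg (by norm_num : (0:ℝ) ≤ 4) ht0)]
  have hK1d : ContinuousOn K (Set.Icc t₁ t₂) := by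
    simp only [hKdef]
    apply ContinuousOn.div_const
    apply ContinuousOn.sub _ continuousOn_const
    apply ContinuousOn.log
    · exact (continuous_const.mul continuous_id |>.sub continuous_const).continuousOn
    · intro t ht
      have := ht.1; intro hcon; linarith
  have hffcont1 : ContinuousOn (fun t => K t / ((t - t₁) * sw)) (Set.Ioc t₁ t₂) := by
    apply ContinuousOn.div (hK1d.mono Set.Ioc_subset_Icc_self)
    · exact ((continuous_id.sub continuous_const).mul continuous_const).continuousOn
    · intro t ht
      exact ne_of_gt (mul_pos (by linarith [ht.1]) hswpos)
  have hffbd1 : ∀ t ∈ Set.Ioc t₁ t₂, |K t / ((t - t₁) * sw)| ≤ 4 / sw := by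
    intro t ht
    have h1 : t₁ < t := ht.1
    have hd : (0:ℝ) < (t - t₁) * sw := mul_pos (by linarith) hswpos
    have hK0 : 0 ≤ K t := hKnonneg t h1.le
    rw [abs_of_nonneg (div_nonneg hK0 hd.le)]
    rw [div_le_div_iff₀ hd hswpos]
    have := hK4 t h1.le
    nlinarith
  set ff : Sph × ℝ → ℝ := fun q => K q.2 / ((q.2 - t₁) * sw) with hffdef
  set gg : Sph × ℝ → ℝ := fun q => EE q * ((q.2 - t₁) * sw) with hggdef
  have hffcont : ContinuousOn ff A' := by
    simp only [hffdef]
    apply ContinuousOn.div (hKqcont.mono hA'A)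
    · exact ((continuous_snd.sub continuous_const).mul continuous_const).continuousOn
    · rintro ⟨ω, t⟩ hq
      have h1 : t₁ < t := hq.2.1
      exact ne_of_gt (mul_pos (by linarith) hswpos)
  have hffbd : ∀ q ∈ A', |ff q| ≤ 4 / sw := fun q hq => hffbd1 q.2 hq.2
  have hffI := hIntH ff hffcont (4 / sw) hffbd
  obtain ⟨CE, hCE⟩ := hAcomp.exists_bound_of_continuousOn hEEcontA
  have hggcont : ContinuousOn gg A := by
    simp only [hggdef]
    exact hEEcontA.mul ((continuous_snd.sub continuous_const).mul continuous_const).continuousOn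
  have hggbd : ∀ q ∈ A', |gg q| ≤ CE * ((t₂ - t₁) * sw) := by
    rintro ⟨ω, t⟩ hq
    have h1 : t₁ < t := hq.2.1
    have h2 : t ≤ t₂ := hq.2.2
    have hEq : |EE (ω, t)| ≤ CE := by
      rw [← Real.norm_eq_abs]; exact hCE _ (hA'A hq)
    have habs : |gg (ω, t)| = |EE (ω, t)| * |(t - t₁) * sw| := by
      simp only [hggdef]; rw [abs_mul]
    rw [habs, abs_of_nonneg (by nlinarith [hswpos.le] : (0:ℝ) ≤ (t - t₁) * sw)]
    apply mul_le_mul hEq (by nlinarith [hswpos.le]) (by nlinarith [hswpos.le])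
      ((abs_nonneg _).trans hEq)
  have hggI := hIntH gg (hggcont.mono hA'A) _ hggbd
  have hKEcont : ContinuousOn (fun q : Sph × ℝ => K q.2 * EE q) A := hKqcont.mul hEEcontA
  obtain ⟨CKE, hCKE⟩ := hAcomp.exists_bound_of_continuousOn hKEcont
  have hKEI := hIntH (fun q : Sph × ℝ => K q.2 * EE q) (hKEcont.mono hA'A) CKE
    (fun q hq => by rw [← Real.norm_eq_abs]; exact hCKE q (hA'A hq))
  -- Fubini : ∫ K·EE = σ * v(t₁,0)
  have hprod1 : ∫ q, K q.2 * EE q ∂ν = σ * v (t₁, (0:E3)) := by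
    rw [hνdef, MeasureTheory.integral_prod _ (hνdef ▸ hKEI.1)]
    calc ∫ ω : Sph, (∫ t, K t * EE (ω, t) ∂(volume.restrict (Set.Ioc t₁ t₂))) ∂μS
        = ∫ _ω : Sph, v (t₁, (0:E3)) ∂μS := by
          apply integral_congr_ae
          filter_upwards with ω
          rw [← intervalIntegral.integral_of_le hle]
          exact (key ω).symm
      _ = σ * v (t₁, (0:E3)) := by
          rw [integral_const, hσdef, smul_eq_mul, hμSdef]; rfl
  have hffgg : ∫ q, ff q * gg q ∂ν = σ * v (t₁, (0:E3)) := by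
    rw [← hprod1]
    apply integral_congr_ae
    filter_upwards [hae] with q hq
    have ht : t₁ < q.2 := hq.2.1
    have hd : (q.2 - t₁) * sw ≠ 0 := ne_of_gt (mul_pos (by linarith) hswpos)
    have hd' : q.2 - t₁ ≠ 0 := sub_ne_zero.mpr (ne_of_gt ht)
    simp only [hffdef, hggdef]
    field_simp
  -- bound on ∫ ff²
  have hff2cont : ContinuousOn (fun q : Sph × ℝ => ff q ^ 2) A' := hffcont.pow 2
  have hff2bd : ∀ q ∈ A', |ff q ^ 2| ≤ (4 / sw) ^ 2 := by
    intro q hq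
    rw [abs_pow]
    exact pow_le_pow_left₀ (abs_nonneg _) (hffbd q hq) 2
  have hff2I := hIntH _ hff2cont _ hff2bd
  set J : ℝ := ∫ t in Set.Ioc t₁ t₂, (K t / ((t - t₁) * sw))^2 with hJdef
  have hff2' : ∫ q, ff q ^ 2 ∂ν = σ * J := by
    rw [hνdef, MeasureTheory.integral_prod _ (hνdef ▸ hff2I.1)]
    calc ∫ ω : Sph, (∫ t, ff (ω, t) ^ 2 ∂(volume.restrict (Set.Ioc t₁ t₂))) ∂μS
        = ∫ _ω : Sph, J ∂μS := by
          apply integral_congr_ae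
          filter_upwards with ω
          rw [hJdef]
      _ = σ * J := by rw [integral_const, hσdef, smul_eq_mul, hμSdef]; rfl
  have hIntR : ∀ h : ℝ → ℝ, ContinuousOn h (Set.Ioc t₁ t₂) → ∀ C, (∀ t ∈ Set.Ioc t₁ t₂, |h t| ≤ C) →
      IntegrableOn h (Set.Ioc t₁ t₂) volume := by
    intro h hc C hC
    have hm : AEStronglyMeasurable h (volume.restrict (Set.Ioc t₁ t₂)) :=
      hc.aestronglyMeasurable measurableSet_Ioc
    have hb : ∀ᵐ t ∂(volume.restrict (Set.Ioc t₁ t₂)), ‖h t‖ ≤ C :=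
      (ae_restrict_mem measurableSet_Ioc).mono fun t ht => by
        rw [Real.norm_eq_abs]; exact hC t ht
    exact memLp_one_iff_integrable.mp (MemLp.of_bound hm C hb)
  have hJle : J ≤ 32 / (t₁ * W) := by
    have e1 : ((t₁ ^ ((1:ℝ)/4))⁻¹) ^ 2 = (t₁ ^ ((1:ℝ)/2))⁻¹ := by
      rw [inv_pow, ← Real.rpow_natCast (t₁ ^ ((1:ℝ)/4)) 2, ← Real.rpow_mul ht₁0.le]
      norm_num
    have e2 : ∀ t : ℝ, t₁ ≤ t → ((t ^ ((3:ℝ)/4))⁻¹) ^ 2 = t ^ (-(3:ℝ)/2) := by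
      intro t ht
      have ht0 : (0:ℝ) ≤ t := by linarith
      rw [inv_pow, ← Real.rpow_natCast (t ^ ((3:ℝ)/4)) 2, ← Real.rpow_mul ht0,
        ← Real.rpow_neg ht0]
      norm_num
    have hrpmono : ∀ t : ℝ, t₁ ≤ t → t ^ (-(3:ℝ)/2) ≤ t₁ ^ (-(3:ℝ)/2) := fun t ht =>
      Real.rpow_le_rpow_of_nonpos ht₁0 ht (by norm_num)
    have hint2 : IntegrableOn (fun t => 16 * ((t₁ ^ ((1:ℝ)/2))⁻¹ * t ^ (-(3:ℝ)/2)) / W)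
        (Set.Ioc t₁ t₂) volume := by
      apply hIntR _ ?_ (16 * ((t₁ ^ ((1:ℝ)/2))⁻¹ * t₁ ^ (-(3:ℝ)/2)) / W)
      · intro t ht
        have htpos : (0:ℝ) < t := by linarith [ht.1]
        have hb0 : (0:ℝ) ≤ t ^ (-(3:ℝ)/2) := Real.rpow_nonneg htpos.le _
        have h0 : (0:ℝ) ≤ (t₁ ^ ((1:ℝ)/2))⁻¹ := inv_nonneg.mpr (Real.rpow_nonneg ht₁0.le _)
        rw [abs_of_nonneg (div_nonneg (mul_nonneg (by norm_num) (mul_nonneg h0 hb0)) hWpos.le)]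
        have := hrpmono t ht.1.le
        apply div_le_div_of_nonneg_right ?_ hWpos.le
        nlinarith
      · apply ContinuousOn.div_const
        apply ContinuousOn.mul continuousOn_const
        apply ContinuousOn.mul continuousOn_const
        apply ContinuousOn.rpow_const continuousOn_id
        intro t ht
        exact Or.inl (by simpa using ne_of_gt (show (0:ℝ) < t by linarith [ht.1]))
    have hmono : J ≤ ∫ t in Set.Ioc t₁ t₂, 16 * ((t₁ ^ ((1:ℝ)/2))⁻¹ * t ^ (-(3:ℝ)/2)) / W := by
      rw [hJdef]
      have hint1 : IntegrableOn (fun t => (K t / ((t - t₁) * sw))^2) (Set.Ioc t₁ t₂) volume := by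
        apply hIntR _ (hffcont1.pow 2) ((4/sw)^2)
        intro t ht
        rw [Pi.pow_apply]
        rw [abs_pow]
        exact pow_le_pow_left₀ (abs_nonneg _) (hffbd1 t ht) 2
      apply setIntegral_mono_on hint1 hint2 measurableSet_Ioc
      intro t ht
      have h1 : t₁ < t := ht.1
      have h0 : (0:ℝ) < t - t₁ := by linarith
      have hK0 : 0 ≤ K t := hKnonneg t h1.le
      have hKle := IDA_K_bound ht₁ h1.le
      have hsq : K t ^ 2 ≤ 16 * (t - t₁)^2 * ((t₁ ^ ((1:ℝ)/2))⁻¹ * t ^ (-(3:ℝ)/2)) := by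
        have hKle' : K t ≤ 4 * (t - t₁) * (t₁ ^ ((1:ℝ)/4))⁻¹ * (t ^ ((3:ℝ)/4))⁻¹ := by
          simp only [hKdef]; exact hKle
        calc K t ^ 2 ≤ (4 * (t - t₁) * (t₁ ^ ((1:ℝ)/4))⁻¹ * (t ^ ((3:ℝ)/4))⁻¹) ^ 2 :=
              pow_le_pow_left₀ hK0 hKle' 2
          _ = 16 * (t - t₁)^2 * (((t₁ ^ ((1:ℝ)/4))⁻¹)^2 * ((t ^ ((3:ℝ)/4))⁻¹)^2) := by ring
          _ = 16 * (t - t₁)^2 * ((t₁ ^ ((1:ℝ)/2))⁻¹ * t ^ (-(3:ℝ)/2)) := by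
              rw [e1, e2 t h1.le]
      rw [div_pow, mul_pow, hsw2]
      rw [div_le_div_iff₀ (by positivity) hWpos]
      calc K t ^ 2 * W ≤ (16 * (t - t₁)^2 * ((t₁ ^ ((1:ℝ)/2))⁻¹ * t ^ (-(3:ℝ)/2))) * W :=
            mul_le_mul_of_nonneg_right hsq hWpos.le
        _ = 16 * ((t₁ ^ ((1:ℝ)/2))⁻¹ * t ^ (-(3:ℝ)/2)) * ((t - t₁)^2 * W) := by ring
    have hpull : ∫ t in Set.Ioc t₁ t₂, 16 * ((t₁ ^ ((1:ℝ)/2))⁻¹ * t ^ (-(3:ℝ)/2)) / W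
        = (16 * (t₁ ^ ((1:ℝ)/2))⁻¹ / W) * ∫ t in Set.Ioc t₁ t₂, t ^ (-(3:ℝ)/2) := by
      rw [← integral_const_mul]
      apply integral_congr_ae
      filter_upwards with t
      ring
    have hrp : ∫ t in Set.Ioc t₁ t₂, t ^ (-(3:ℝ)/2) ≤ 2 * t₁ ^ (-(1:ℝ)/2) := by
      rw [← intervalIntegral.integral_of_le hle]
      rw [integral_rpow (Or.inr ⟨by norm_num, by
        rw [Set.uIcc_of_le hle]
        intro hmem
        exact absurd hmem.1 (by linarith)⟩)]
      rw [show (-(3:ℝ)/2 + 1) = -(1:ℝ)/2 by norm_num]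
      have h1 : (0:ℝ) ≤ t₂ ^ (-(1:ℝ)/2) := Real.rpow_nonneg (by linarith) _
      have h3 : (0:ℝ) ≤ t₁ ^ (-(1:ℝ)/2) := Real.rpow_nonneg ht₁0.le _
      have h4 : (t₂ ^ (-(1:ℝ)/2) - t₁ ^ (-(1:ℝ)/2)) / (-(1:ℝ)/2)
          = 2 * (t₁ ^ (-(1:ℝ)/2) - t₂ ^ (-(1:ℝ)/2)) := by ring
      rw [h4]
      linarith
    have ha2 : (t₁ ^ ((1:ℝ)/2))⁻¹ * t₁ ^ (-(1:ℝ)/2) = t₁⁻¹ := by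
      rw [show (-(1:ℝ)/2) = -((1:ℝ)/2) by norm_num, Real.rpow_neg ht₁0.le, ← mul_inv,
        ← Real.rpow_add ht₁0]
      norm_num
    have hcW : (0:ℝ) ≤ 16 * (t₁ ^ ((1:ℝ)/2))⁻¹ / W :=
      div_nonneg (mul_nonneg (by norm_num) (inv_nonneg.mpr (Real.rpow_nonneg ht₁0.le _))) hWpos.le
    calc J ≤ ∫ t in Set.Ioc t₁ t₂, 16 * ((t₁ ^ ((1:ℝ)/2))⁻¹ * t ^ (-(3:ℝ)/2)) / W := hmono
      _ = (16 * (t₁ ^ ((1:ℝ)/2))⁻¹ / W) * ∫ t in Set.Ioc t₁ t₂, t ^ (-(3:ℝ)/2) := hpull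
      _ ≤ (16 * (t₁ ^ ((1:ℝ)/2))⁻¹ / W) * (2 * t₁ ^ (-(1:ℝ)/2)) :=
          mul_le_mul_of_nonneg_left hrp hcW
      _ = 32 * ((t₁ ^ ((1:ℝ)/2))⁻¹ * t₁ ^ (-(1:ℝ)/2)) / W := by ring
      _ = 32 * t₁⁻¹ / W := by rw [ha2]
      _ = 32 / (t₁ * W) := by
          rw [show (32:ℝ) * t₁⁻¹ = 32 / t₁ by ring, div_div]
  have hff2 : ∫ q, ff q ^ 2 ∂ν ≤ σ * (32 / (t₁ * W)) := by
    rw [hff2']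
    exact mul_le_mul_of_nonneg_left hJle hσpos.le

  -- ===== tanSq comparison and conclusion =====
  set Tz : VF → ℝ := fun z => ∫ t in t₁..t₂, (t - t₁) ^ 2 *
      ∫ ω : Sph, tanSq (Zop (fun _ : Fin 1 => z) v) (t, (t - t₁) • (ω : E3))
        * (1 + max (t - (t - t₁)) 0) ^ (1 + 2 * γ) with hTzdef
  have hZop1 : ∀ z : VF, Zop (fun _ : Fin 1 => z) v = VF.app z v := by
    intro z
    simp [Zop, List.ofFn_succ]
  set br : VF → Sph × ℝ → ℝ := fun z q =>
    (pt (VF.app z v) (q.2, (q.2 - t₁) • (q.1:E3))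
        + ∑ i, (q.1:E3) i * px i (VF.app z v) (q.2, (q.2 - t₁) • (q.1:E3))) ^ 2
      + ((∑ i, (px i (VF.app z v) (q.2, (q.2 - t₁) • (q.1:E3))) ^ 2)
        - (∑ i, (q.1:E3) i * px i (VF.app z v) (q.2, (q.2 - t₁) • (q.1:E3))) ^ 2) with hbrdef
  set Gt : VF → Sph × ℝ → ℝ := fun z q => (4 * (q.2 - t₁) ^ 2) * (br z q * W) with hGtdef
  have hsphnorm : ∀ ω : Sph, ‖(ω:E3)‖ = 1 := by
    intro ω
    have h := ω.2
    rw [mem_sphere_iff_norm] at h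
    simpa using h
  have hbr_eq : ∀ (z : VF) (ω : Sph) (t : ℝ), t₁ < t →
      br z (ω, t) = tanSq (VF.app z v) (t, (t - t₁) • (ω:E3)) := by
    intro z ω t ht
    have hpr := IDA_pr_cone (VF.app z v) ht (hsphnorm ω)
    simp only [hbrdef]
    unfold tanSq angSq gradSq
    rw [hpr]
  have hbrcont : ∀ z : VF, ContinuousOn (fderiv ℝ (VF.app z v)) U → ContinuousOn (br z) A := by
    intro z hc
    simp only [hbrdef]
    have hptc : ContinuousOn
        (fun q : Sph × ℝ => pt (VF.app z v) (q.2, (q.2 - t₁) • (q.1:E3))) A :=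
      (hc.comp hcm.continuousOn hmapsA).clm_apply continuousOn_const
    have hpxc : ∀ i : Fin 3, ContinuousOn
        (fun q : Sph × ℝ => px i (VF.app z v) (q.2, (q.2 - t₁) • (q.1:E3))) A :=
      fun i => (hc.comp hcm.continuousOn hmapsA).clm_apply continuousOn_const
    apply ContinuousOn.add
    · exact (hptc.add (continuousOn_finset_sum _ fun i _ =>
        ((hcoordcont i).continuousOn).mul (hpxc i))).pow 2
    · exact (continuousOn_finset_sum _ fun i _ => (hpxc i).pow 2).sub
        ((continuousOn_finset_sum _ fun i _ =>
          ((hcoordcont i).continuousOn).mul (hpxc i)).pow 2)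
  have hGtIb : ∀ z : VF, ContinuousOn (fderiv ℝ (VF.app z v)) U → Integrable (Gt z) ν := by
    intro z hc
    have hcont : ContinuousOn (Gt z) A := by
      simp only [hGtdef]
      exact ((continuous_const.mul ((continuous_snd.sub continuous_const).pow 2)).continuousOn).mul
        ((hbrcont z hc).mul continuousOn_const)
    obtain ⟨C, hC⟩ := hAcomp.exists_bound_of_continuousOn hcont
    exact (hIntH _ (hcont.mono hA'A) C (fun q hq => by
      rw [← Real.norm_eq_abs]; exact hC q (hA'A hq))).1
  have hfCscal : ContinuousOn (fderiv ℝ (VF.app VF.scal v)) U := by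
    rw [← hZsdef]; exact hZsfC
  have hfCboost : ∀ i, ContinuousOn (fderiv ℝ (VF.app (VF.boost i) v)) U := by
    intro i
    have h := hZbfC i
    rw [hZbdef] at h
    simpa using h
  have hdom : ∀ q ∈ A', gg q ^ 2 ≤
      Gt VF.scal q + (Gt (VF.boost 0) q + Gt (VF.boost 1) q + Gt (VF.boost 2) q) := by
    rintro ⟨ω, t⟩ hq
    have ht : t₁ < t := hq.2.1
    have hw : ‖(ω:E3)‖ = 1 := hsphnorm ω
    have hsumsq := IDA_sum_sq hw
    have hEEq : EE (ω, t) = (pt Zs (t, (t - t₁) • (ω:E3)) + pr Zs (t, (t - t₁) • (ω:E3)))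
        + ∑ i, (ω:E3) i * (pt (Zb i) (t, (t - t₁) • (ω:E3)) + pr (Zb i) (t, (t - t₁) • (ω:E3))) := by
      simp only [hEEdef]
      rw [IDA_fderiv_pair Zs _ _, ← IDA_pr_cone Zs ht hw]
      congr 1
      apply Finset.sum_congr rfl
      intro i _
      rw [IDA_fderiv_pair (Zb i) _ _, ← IDA_pr_cone (Zb i) ht hw]
    have hts : ∀ φ : Spt → ℝ,
        (pt φ (t, (t - t₁) • (ω:E3)) + pr φ (t, (t - t₁) • (ω:E3)))^2
          ≤ tanSq φ (t, (t - t₁) • (ω:E3)) := by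
      intro φ
      unfold tanSq
      linarith [IDA_angSq_nonneg φ (t, (t - t₁) • (ω:E3))]
    have hEEsq : EE (ω, t)^2 ≤ 4*(tanSq (VF.app VF.scal v) (t, (t - t₁) • (ω:E3))
        + (tanSq (VF.app (VF.boost 0) v) (t, (t - t₁) • (ω:E3))
          + tanSq (VF.app (VF.boost 1) v) (t, (t - t₁) • (ω:E3))
          + tanSq (VF.app (VF.boost 2) v) (t, (t - t₁) • (ω:E3)))) := by
      rw [hEEq, Fin.sum_univ_three]
      rw [Fin.sum_univ_three] at hsumsq
      have hquad := IDA_quad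
        (pt Zs (t, (t - t₁) • (ω:E3)) + pr Zs (t, (t - t₁) • (ω:E3)))
        (pt (Zb 0) (t, (t - t₁) • (ω:E3)) + pr (Zb 0) (t, (t - t₁) • (ω:E3)))
        (pt (Zb 1) (t, (t - t₁) • (ω:E3)) + pr (Zb 1) (t, (t - t₁) • (ω:E3)))
        (pt (Zb 2) (t, (t - t₁) • (ω:E3)) + pr (Zb 2) (t, (t - t₁) • (ω:E3)))
        ((ω:E3) 0) ((ω:E3) 1) ((ω:E3) 2) hsumsq
      have h1 := hts Zs
      have h2 := hts (Zb 0)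
      have h3 := hts (Zb 1)
      have h4 := hts (Zb 2)
      rw [hZsdef] at h1
      rw [hZbdef] at h2 h3 h4
      simp only at h2 h3 h4
      linarith
    calc gg (ω, t) ^ 2 = EE (ω, t)^2 * ((t - t₁)^2 * W) := by
          simp only [hggdef]
          rw [mul_pow, mul_pow, hsw2]
          try ring
      _ ≤ (4*(tanSq (VF.app VF.scal v) (t, (t - t₁) • (ω:E3))
          + (tanSq (VF.app (VF.boost 0) v) (t, (t - t₁) • (ω:E3))
            + tanSq (VF.app (VF.boost 1) v) (t, (t - t₁) • (ω:E3))
            + tanSq (VF.app (VF.boost 2) v) (t, (t - t₁) • (ω:E3))))) * ((t - t₁)^2 * W) :=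
          mul_le_mul_of_nonneg_right hEEsq (mul_nonneg (sq_nonneg _) hWpos.le)
      _ = Gt VF.scal (ω,t) + (Gt (VF.boost 0) (ω,t) + Gt (VF.boost 1) (ω,t)
            + Gt (VF.boost 2) (ω,t)) := by
          simp only [hGtdef]
          rw [hbr_eq VF.scal ω t ht, hbr_eq (VF.boost 0) ω t ht,
            hbr_eq (VF.boost 1) ω t ht, hbr_eq (VF.boost 2) ω t ht]
          ring
  have hgg2cont : ContinuousOn (fun q : Sph × ℝ => gg q ^ 2) A' := (hggcont.mono hA'A).pow 2
  have hgg2I := hIntH _ hgg2cont ((CE * ((t₂ - t₁) * sw))^2) (fun q hq => by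
    rw [abs_pow]
    exact pow_le_pow_left₀ (abs_nonneg _) (hggbd q hq) 2)
  have hGs : Integrable (Gt VF.scal) ν := hGtIb VF.scal hfCscal
  have hGb : ∀ i, Integrable (Gt (VF.boost i)) ν := fun i => hGtIb _ (hfCboost i)
  have hgg2le : ∫ q, gg q ^ 2 ∂ν ≤ ∫ q, (Gt VF.scal q
      + (Gt (VF.boost 0) q + Gt (VF.boost 1) q + Gt (VF.boost 2) q)) ∂ν := by
    have hI01 : Integrable (fun q => Gt (VF.boost 0) q + Gt (VF.boost 1) q) ν :=
      (hGb 0).add (hGb 1)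
    have hI012 : Integrable (fun q => Gt (VF.boost 0) q + Gt (VF.boost 1) q + Gt (VF.boost 2) q) ν :=
      hI01.add (hGb 2)
    have hIsum : Integrable (fun q => Gt VF.scal q
        + (Gt (VF.boost 0) q + Gt (VF.boost 1) q + Gt (VF.boost 2) q)) ν := hGs.add hI012
    apply integral_mono_ae hgg2I.1 hIsum
    filter_upwards [hae] with q hq
    exact hdom q hq
  have hTz_eq : ∀ z : VF, ContinuousOn (fderiv ℝ (VF.app z v)) U →
      ∫ q, Gt z q ∂ν = 4 * Tz z := by
    intro z hc
    have hint := hGtIb z hc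
    rw [hνdef, MeasureTheory.integral_prod_symm _ (hνdef ▸ hint)]
    have hstep : ∀ t ∈ Set.Ioc t₁ t₂, (∫ ω : Sph, Gt z (ω, t) ∂μS)
        = 4 * ((t - t₁)^2 * ∫ ω : Sph, tanSq (Zop (fun _ : Fin 1 => z) v) (t, (t - t₁) • (ω:E3))
            * (1 + max (t - (t - t₁)) 0) ^ (1 + 2*γ) ∂μS) := by
      intro t ht
      have hwt : ((1:ℝ) + max (t - (t - t₁)) 0) ^ (1 + 2*γ) = W := by
        rw [sub_sub_cancel, max_eq_left ht₁0.le, hWdef]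
      have hin : (∫ ω : Sph, br z (ω, t) * W ∂μS)
          = ∫ ω : Sph, tanSq (Zop (fun _ : Fin 1 => z) v) (t, (t - t₁) • (ω:E3))
              * (1 + max (t - (t - t₁)) 0) ^ (1 + 2*γ) ∂μS := by
        apply integral_congr_ae
        filter_upwards with ω
        rw [hZop1 z, hwt, hbr_eq z ω t ht.1]
      calc (∫ ω : Sph, Gt z (ω, t) ∂μS)
          = ∫ ω : Sph, (4 * (t - t₁)^2) * (br z (ω, t) * W) ∂μS := by
            apply integral_congr_ae
            filter_upwards with ω
            simp only [hGtdef]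
        _ = (4 * (t - t₁)^2) * ∫ ω : Sph, br z (ω, t) * W ∂μS := integral_const_mul _ _
        _ = 4 * ((t - t₁)^2 * ∫ ω : Sph, tanSq (Zop (fun _ : Fin 1 => z) v) (t, (t - t₁) • (ω:E3))
              * (1 + max (t - (t - t₁)) 0) ^ (1 + 2*γ) ∂μS) := by
            rw [hin]; ring
    calc (∫ t, (∫ ω : Sph, Gt z (ω, t) ∂μS) ∂(volume.restrict (Set.Ioc t₁ t₂)))
        = ∫ t in Set.Ioc t₁ t₂, 4 * ((t - t₁)^2 *
            ∫ ω : Sph, tanSq (Zop (fun _ : Fin 1 => z) v) (t, (t - t₁) • (ω:E3))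
              * (1 + max (t - (t - t₁)) 0) ^ (1 + 2*γ) ∂μS) :=
          setIntegral_congr_fun measurableSet_Ioc hstep
      _ = 4 * ∫ t in Set.Ioc t₁ t₂, ((t - t₁)^2 *
            ∫ ω : Sph, tanSq (Zop (fun _ : Fin 1 => z) v) (t, (t - t₁) • (ω:E3))
              * (1 + max (t - (t - t₁)) 0) ^ (1 + 2*γ) ∂μS) := integral_const_mul 4 _
      _ = 4 * Tz z := by
          simp only [hTzdef]
          rw [intervalIntegral.integral_of_le hle]
  have hTz0 : ∀ z : VF, 0 ≤ Tz z := by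
    intro z
    simp only [hTzdef]
    apply intervalIntegral.integral_nonneg hle
    intro t ht
    apply mul_nonneg (sq_nonneg _)
    apply integral_nonneg
    intro ω
    apply mul_nonneg (IDA_tanSq_nonneg _ _)
    apply Real.rpow_nonneg
    have := le_max_right (t - (t - t₁)) (0:ℝ)
    linarith
  have hCS := IDA_cs ν ff gg hffI.2 hggI.2
  set S4 : ℝ := Real.sqrt (Tz VF.scal) + (Real.sqrt (Tz (VF.boost 0))
      + Real.sqrt (Tz (VF.boost 1)) + Real.sqrt (Tz (VF.boost 2))) with hS4def
  have hS40 : 0 ≤ S4 := by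
    simp only [hS4def]
    positivity
  have hgg2T : ∫ q, gg q ^ 2 ∂ν ≤ 4 * (Tz VF.scal + (Tz (VF.boost 0) + Tz (VF.boost 1)
      + Tz (VF.boost 2))) := by
    refine hgg2le.trans ?_
    have hI01 : Integrable (fun q => Gt (VF.boost 0) q + Gt (VF.boost 1) q) ν :=
      (hGb 0).add (hGb 1)
    have hI012 : Integrable (fun q => Gt (VF.boost 0) q + Gt (VF.boost 1) q + Gt (VF.boost 2) q) ν :=
      hI01.add (hGb 2)
    rw [integral_add hGs hI012, integral_add hI01 (hGb 2), integral_add (hGb 0) (hGb 1)]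
    rw [hTz_eq _ hfCscal, hTz_eq _ (hfCboost 0), hTz_eq _ (hfCboost 1), hTz_eq _ (hfCboost 2)]
    apply le_of_eq
    ring
  have hsqrt4 : Real.sqrt 4 = 2 := by
    rw [show (4:ℝ) = 2^2 by norm_num, Real.sqrt_sq (by norm_num : (0:ℝ) ≤ 2)]
  have hsqrtgg : Real.sqrt (∫ q, gg q ^ 2 ∂ν) ≤ 2 * S4 := by
    calc Real.sqrt (∫ q, gg q ^ 2 ∂ν)
        ≤ Real.sqrt (4 * (Tz VF.scal + (Tz (VF.boost 0) + Tz (VF.boost 1) + Tz (VF.boost 2)))) :=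
          Real.sqrt_le_sqrt hgg2T
      _ = 2 * Real.sqrt (Tz VF.scal + (Tz (VF.boost 0) + Tz (VF.boost 1) + Tz (VF.boost 2))) := by
          rw [Real.sqrt_mul (by norm_num : (0:ℝ) ≤ 4), hsqrt4]
      _ ≤ 2 * S4 := by
          have s1 := IDA_sqrt_add (Tz VF.scal) (Tz (VF.boost 0) + Tz (VF.boost 1) + Tz (VF.boost 2))
          have s2 := IDA_sqrt_add (Tz (VF.boost 0) + Tz (VF.boost 1)) (Tz (VF.boost 2))
          have s3 := IDA_sqrt_add (Tz (VF.boost 0)) (Tz (VF.boost 1))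
          simp only [hS4def]
          linarith
  have hsqrtff : Real.sqrt (∫ q, ff q ^ 2 ∂ν) ≤ Real.sqrt (σ * (32 / (t₁ * W))) :=
    Real.sqrt_le_sqrt hff2
  have hmain : σ * |v (t₁, (0:E3))| ≤ Real.sqrt (σ * (32 / (t₁ * W))) * (2 * S4) := by
    calc σ * |v (t₁, (0:E3))| = |∫ q, ff q * gg q ∂ν| := by
          rw [hffgg, abs_mul, abs_of_pos hσpos]
      _ ≤ Real.sqrt (∫ q, ff q ^ 2 ∂ν) * Real.sqrt (∫ q, gg q ^ 2 ∂ν) := hCS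
      _ ≤ Real.sqrt (σ * (32 / (t₁ * W))) * (2 * S4) :=
          mul_le_mul hsqrtff hsqrtgg (Real.sqrt_nonneg _) (Real.sqrt_nonneg _)
  have hfac : t₁ ^ (1+γ) * Real.sqrt (σ * (32 / (t₁ * W))) ≤ Real.sqrt (32 * σ) := by
    have hrw : σ * (32 / (t₁ * W)) = (32 * σ) * (t₁ * W)⁻¹ := by
      field_simp
    rw [hrw, Real.sqrt_mul (mul_nonneg (by norm_num) hσpos.le) _]
    have hsq : t₁ ^ (1+γ) * Real.sqrt ((t₁*W)⁻¹) ≤ 1 := by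
      rw [Real.sqrt_inv]
      have hb : 0 < Real.sqrt (t₁*W) := Real.sqrt_pos.mpr (mul_pos ht₁0 hWpos)
      rw [← div_eq_mul_inv, div_le_one hb]
      have h1 : t₁ ^ (1+γ) = Real.sqrt ((t₁ ^ (1+γ))^2) :=
        (Real.sqrt_sq (Real.rpow_nonneg ht₁0.le _)).symm
      rw [h1]
      apply Real.sqrt_le_sqrt
      have h2 : (t₁ ^ (1+γ))^2 = t₁ ^ ((2:ℝ) + 2*γ) := by
        rw [← Real.rpow_natCast (t₁ ^ (1+γ)) 2, ← Real.rpow_mul ht₁0.le]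
        congr 1
        push_cast
        ring
      rw [h2, show ((2:ℝ)+2*γ) = 1 + (1+2*γ) by ring, Real.rpow_add ht₁0, Real.rpow_one]
      apply mul_le_mul_of_nonneg_left _ ht₁0.le
      rw [hWdef]
      exact Real.rpow_le_rpow ht₁0.le (by linarith) (by linarith)
    calc t₁^(1+γ) * (Real.sqrt (32*σ) * Real.sqrt ((t₁*W)⁻¹))
        = Real.sqrt (32*σ) * (t₁^(1+γ) * Real.sqrt ((t₁*W)⁻¹)) := by ring
      _ ≤ Real.sqrt (32*σ) * 1 := mul_le_mul_of_nonneg_left hsq (Real.sqrt_nonneg _)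
      _ = Real.sqrt (32*σ) := mul_one _
  have hrpow0 : 0 < t₁ ^ (1+γ) := Real.rpow_pos_of_pos ht₁0 _
  have hfinal1 : t₁ ^ (1+γ) * |v (t₁, (0:E3))| ≤ (2 * Real.sqrt (32*σ) / σ) * S4 := by
    have h5 : σ * (t₁ ^ (1+γ) * |v (t₁, (0:E3))|)
        ≤ σ * ((2 * Real.sqrt (32*σ) / σ) * S4) := by
      calc σ * (t₁ ^ (1+γ) * |v (t₁, (0:E3))|) = t₁^(1+γ) * (σ * |v (t₁, (0:E3))|) := by ring
        _ ≤ t₁^(1+γ) * (Real.sqrt (σ * (32 / (t₁ * W))) * (2*S4)) :=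
            mul_le_mul_of_nonneg_left hmain hrpow0.le
        _ = (t₁^(1+γ) * Real.sqrt (σ * (32 / (t₁ * W)))) * (2*S4) := by ring
        _ ≤ Real.sqrt (32*σ) * (2*S4) :=
            mul_le_mul_of_nonneg_right hfac (by positivity)
        _ = σ * ((2 * Real.sqrt (32*σ) / σ) * S4) := by field_simp
    exact le_of_mul_le_mul_left h5 hσpos
  -- sum domination
  have h1sum : (∑ I : Fin 1 → VF, Real.sqrt (∫ t in t₁..t₂, (t - t₁) ^ 2 *
      ∫ ω : Sph, tanSq (Zop I v) (t, (t - t₁) • (ω : E3))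
        * (1 + max (t - (t - t₁)) 0) ^ (1 + 2 * γ)))
      = ∑ z : VF, Real.sqrt (Tz z) := by
    apply Fintype.sum_equiv (Equiv.funUnique (Fin 1) VF)
    intro I
    have hIfun : I = fun _ : Fin 1 => I default :=
      funext fun j => by rw [Subsingleton.elim j default]
    simp only [hTzdef]
    conv_lhs => rw [hIfun]
    rfl
  have h2sum : S4 ≤ ∑ z : VF, Real.sqrt (Tz z) := by
    have hval : ∑ z ∈ ({VF.scal, VF.boost 0, VF.boost 1, VF.boost 2} : Finset VF),
        Real.sqrt (Tz z) = S4 := by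
      rw [Finset.sum_insert (by decide), Finset.sum_insert (by decide),
        Finset.sum_insert (by decide), Finset.sum_singleton, hS4def]
      ring
    rw [← hval]
    exact Finset.sum_le_sum_of_subset_of_nonneg (Finset.subset_univ _)
      (fun z _ _ => Real.sqrt_nonneg _)
  have h3sum : (∑ I : Fin 1 → VF, Real.sqrt (∫ t in t₁..t₂, (t - t₁) ^ 2 *
      ∫ ω : Sph, tanSq (Zop I v) (t, (t - t₁) • (ω : E3))
        * (1 + max (t - (t - t₁)) 0) ^ (1 + 2 * γ)))
      ≤ ∑ m ∈ Finset.range 4, ∑ I : Fin m → VF, Real.sqrt (∫ t in t₁..t₂, (t - t₁) ^ 2 *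
          ∫ ω : Sph, tanSq (Zop I v) (t, (t - t₁) • (ω : E3))
            * (1 + max (t - (t - t₁)) 0) ^ (1 + 2 * γ)) := by
    apply Finset.single_le_sum (f := fun m => ∑ I : Fin m → VF,
      Real.sqrt (∫ t in t₁..t₂, (t - t₁) ^ 2 *
        ∫ ω : Sph, tanSq (Zop I v) (t, (t - t₁) • (ω : E3))
          * (1 + max (t - (t - t₁)) 0) ^ (1 + 2 * γ)))
    · intro m _
      apply Finset.sum_nonneg
      intro I _
      exact Real.sqrt_nonneg _
    · decide
  have hSsum : S4 ≤ ∑ m ∈ Finset.range 4, ∑ I : Fin m → VF,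
      Real.sqrt (∫ t in t₁..t₂, (t - t₁) ^ 2 *
        ∫ ω : Sph, tanSq (Zop I v) (t, (t - t₁) • (ω : E3))
          * (1 + max (t - (t - t₁)) 0) ^ (1 + 2 * γ)) := by
    calc S4 ≤ ∑ z : VF, Real.sqrt (Tz z) := h2sum
      _ = ∑ I : Fin 1 → VF, Real.sqrt (∫ t in t₁..t₂, (t - t₁) ^ 2 *
          ∫ ω : Sph, tanSq (Zop I v) (t, (t - t₁) • (ω : E3))
            * (1 + max (t - (t - t₁)) 0) ^ (1 + 2 * γ)) := h1sum.symm
      _ ≤ _ := h3sum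
  have hbig0 : 0 ≤ ∑ m ∈ Finset.range 4, ∑ I : Fin m → VF,
      Real.sqrt (∫ t in t₁..t₂, (t - t₁) ^ 2 *
        ∫ ω : Sph, tanSq (Zop I v) (t, (t - t₁) • (ω : E3))
          * (1 + max (t - (t - t₁)) 0) ^ (1 + 2 * γ)) := by
    apply Finset.sum_nonneg
    intro m _
    apply Finset.sum_nonneg
    intro I _
    exact Real.sqrt_nonneg _
  have hCnn : (0:ℝ) ≤ 2 * Real.sqrt (32*σ) / σ :=
    div_nonneg (mul_nonneg (by norm_num) (Real.sqrt_nonneg _)) hσpos.le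
  calc t₁ ^ (1 + γ) * |v (t₁, (0:E3))| ≤ (2 * Real.sqrt (32*σ) / σ) * S4 := hfinal1
    _ ≤ (2 * Real.sqrt (32 * σ) / σ + 1) * (∑ m ∈ Finset.range 4, ∑ I : Fin m → VF,
        Real.sqrt (∫ t in t₁..t₂, (t - t₁) ^ 2 *
          ∫ ω : Sph, tanSq (Zop I v) (t, (t - t₁) • (ω : E3))
            * (1 + max (t - (t - t₁)) 0) ^ (1 + 2 * γ))) :=
      mul_le_mul (by linarith) hSsum hS40 (by linarith)

end
end
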